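/- The function W has exactly one local maximizer z* on ℝ^N (so z* is also its unique global maximizer), and for each n there exists a minimizer (a^{n*}, b^{n*}) ∈ A^n of (a^n, b^n) ↦ G^n(Y^n|z*_n, a^n, b^n), with common price-sensitivity value β*_n > 0, such that z*_n = 1/β*_n + Σ_{l=1}^N ĝ_l(z*_l)/β*_l for every n = 1,…,N. -/

import Mathlib

set_option linter.unusedSectionVars false
set_option maxHeartbeats 1000000

open Real Set Filter Topology

namespace Stmt9

variable {ι : Type*} [Fintype ι] [DecidableEq ι]

/-- The open positive orthant. -/
def orth (ι : Type*) : Set (ι → ℝ) := {Y | ∀ i, 0 < Y i}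

lemma isOpen_orth : IsOpen (orth ι) := by
  have : orth ι = ⋂ i, (fun Y : ι → ℝ => Y i) ⁻¹' Ioi 0 := by
    ext Y; simp [orth, mem_iInter, mem_preimage]
  rw [this]
  exact isOpen_iInter_of_finite fun i => (continuous_apply i).isOpen_preimage _ isOpen_Ioi

variable {G : (ι → ℝ) → ℝ}

section basic
variable (hGs : ContDiffOn ℝ 2 G (orth ι))
    (hGhom : ∀ lam : ℝ, 0 < lam → ∀ Y : ι → ℝ, (∀ i, 0 < Y i) → G (lam • Y) = lam * G Y)
    (hGd1 : ∀ Y : ι → ℝ, (∀ i, 0 < Y i) → ∀ i, 0 < fderiv ℝ G Y (Pi.single i 1))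

include hGs in
lemma diffAt {Y : ι → ℝ} (hY : Y ∈ orth ι) : DifferentiableAt ℝ G Y :=
  (hGs.contDiffAt (isOpen_orth.mem_nhds hY)).differentiableAt (by norm_num)

include hGs in
lemma contAt {Y : ι → ℝ} (hY : Y ∈ orth ι) : ContinuousAt G Y :=
  (diffAt hGs hY).continuousAt

include hGs hGhom in
/-- Euler's identity: `fderiv G Y Y = G Y`. -/
lemma euler {Y : ι → ℝ} (hY : Y ∈ orth ι) : fderiv ℝ G Y Y = G Y := by
  have hmem : ∀ lam : ℝ, 0 < lam → lam • Y ∈ orth ι := fun lam hl i => by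
    simpa [smul_eq_mul] using mul_pos hl (hY i)
  -- the map lam ↦ G (lam • Y) has derivative (fderiv G Y) Y at 1
  have h1 : HasDerivAt (fun lam : ℝ => G (lam • Y)) (fderiv ℝ G Y Y) 1 := by
    have hs : HasDerivAt (fun lam : ℝ => lam • Y) Y 1 := by
      simpa using (hasDerivAt_id (1:ℝ)).smul_const Y
    have hG : HasFDerivAt G (fderiv ℝ G Y) ((1:ℝ) • Y) := by
      rw [one_smul]; exact (diffAt hGs hY).hasFDerivAt
    exact hG.comp_hasDerivAt 1 hs
  have h2 : HasDerivAt (fun lam : ℝ => G (lam • Y)) (G Y) 1 := by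
    have he : (fun lam : ℝ => G (lam • Y)) =ᶠ[𝓝 (1:ℝ)] fun lam => lam * G Y := by
      filter_upwards [Ioi_mem_nhds (show (0:ℝ) < 1 by norm_num)] with lam hl
      exact hGhom lam hl Y hY
    have hmul : HasDerivAt (fun lam : ℝ => lam * G Y) (G Y) 1 := by
      simpa using (hasDerivAt_id (1:ℝ)).mul_const (G Y)
    exact hmul.congr_of_eventuallyEq he
  exact h1.unique h2

include hGs hGhom hGd1 in
lemma G_pos {Y : ι → ℝ} [Nonempty ι] (hY : Y ∈ orth ι) : 0 < G Y := by
  rw [← euler hGs hGhom hY]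
  have hrep : Y = ∑ i, Y i • (Pi.single i (1:ℝ) : ι → ℝ) := by
    ext j; simp [Pi.single_apply]
  calc (0:ℝ) < ∑ i, Y i * fderiv ℝ G Y (Pi.single i 1) :=
        Finset.sum_pos (fun i _ => mul_pos (hY i) (hGd1 Y hY i)) Finset.univ_nonempty
    _ = fderiv ℝ G Y Y := by
        set L := fderiv ℝ G Y with hL
        conv_rhs => rw [hrep]
        rw [map_sum]
        simp [smul_eq_mul]

end basic

section second
variable (hGs : ContDiffOn ℝ 2 G (orth ι))
    (hGhom : ∀ lam : ℝ, 0 < lam → ∀ Y : ι → ℝ, (∀ i, 0 < Y i) → G (lam • Y) = lam * G Y)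

include hGs

lemma fderiv_cd1 : ContDiffOn ℝ 1 (fderiv ℝ G) (orth ι) :=
  hGs.fderiv_of_isOpen isOpen_orth (by norm_num)

lemma fderiv_diffAt {Y : ι → ℝ} (hY : Y ∈ orth ι) : DifferentiableAt ℝ (fderiv ℝ G) Y :=
  ((fderiv_cd1 hGs).differentiableOn one_ne_zero).differentiableAt (isOpen_orth.mem_nhds hY)

lemma gdir_hasFDerivAt {Y : ι → ℝ} (hY : Y ∈ orth ι) (v : ι → ℝ) :
    HasFDerivAt (fun W => fderiv ℝ G W v)
      ((ContinuousLinearMap.apply ℝ ℝ v).comp (fderiv ℝ (fderiv ℝ G) Y)) Y :=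
  (ContinuousLinearMap.apply ℝ ℝ v).hasFDerivAt.comp Y (fderiv_diffAt hGs hY).hasFDerivAt

lemma gdir_fderiv {Y : ι → ℝ} (hY : Y ∈ orth ι) (v u : ι → ℝ) :
    fderiv ℝ (fun W => fderiv ℝ G W v) Y u = fderiv ℝ (fderiv ℝ G) Y u v := by
  rw [(gdir_hasFDerivAt hGs hY v).fderiv]; rfl

lemma sd_symm {Y : ι → ℝ} (hY : Y ∈ orth ι) (v w : ι → ℝ) :
    fderiv ℝ (fderiv ℝ G) Y v w = fderiv ℝ (fderiv ℝ G) Y w v := by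
  refine second_derivative_symmetric_of_eventually (f := G) ?_ (fderiv_diffAt hGs hY).hasFDerivAt v w
  filter_upwards [isOpen_orth.mem_nhds hY] with y hy
  exact (diffAt hGs hy).hasFDerivAt

include hGhom in
lemma fderiv_ray {Y : ι → ℝ} (hY : Y ∈ orth ι) {lam : ℝ} (hlam : 0 < lam) :
    fderiv ℝ G (lam • Y) = fderiv ℝ G Y := by
  have hmem : lam • Y ∈ orth ι := fun i => by
    simpa [smul_eq_mul] using mul_pos hlam (hY i)
  have hs : HasFDerivAt (fun W : ι → ℝ => lam • W)
      (lam • ContinuousLinearMap.id ℝ (ι → ℝ)) Y := (hasFDerivAt_id Y).const_smul lam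
  have h1 : HasFDerivAt (fun W => G (lam • W))
      ((fderiv ℝ G (lam • Y)).comp (lam • ContinuousLinearMap.id ℝ (ι → ℝ))) Y :=
    (diffAt hGs hmem).hasFDerivAt.comp Y hs
  have heq : (fun W => lam * G W) =ᶠ[𝓝 Y] (fun W => G (lam • W)) := by
    filter_upwards [isOpen_orth.mem_nhds hY] with W hW
    exact (hGhom lam hlam W hW).symm
  have h1' : HasFDerivAt (fun W => lam * G W)
      ((fderiv ℝ G (lam • Y)).comp (lam • ContinuousLinearMap.id ℝ (ι → ℝ))) Y :=
    h1.congr_of_eventuallyEq heq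
  have h2 : HasFDerivAt (fun W => lam * G W) (lam • fderiv ℝ G Y) Y :=
    (diffAt hGs hY).hasFDerivAt.const_mul lam
  have hEq := h1'.unique h2
  ext u
  have := congrArg (fun L : (ι → ℝ) →L[ℝ] ℝ => L u) hEq
  simp only [ContinuousLinearMap.comp_apply, ContinuousLinearMap.smul_apply,
    ContinuousLinearMap.coe_smul', Pi.smul_apply, ContinuousLinearMap.coe_id', id_eq] at this
  have h3 : fderiv ℝ G (lam • Y) (lam • u) = lam * fderiv ℝ G Y u := by
    simpa [smul_eq_mul] using this
  rw [map_smul] at h3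
  have : lam * fderiv ℝ G (lam • Y) u = lam * fderiv ℝ G Y u := by
    simpa [smul_eq_mul] using h3
  exact mul_left_cancel₀ (ne_of_gt hlam) this

include hGhom in
lemma gdir_fderiv_self {Y : ι → ℝ} (hY : Y ∈ orth ι) (v : ι → ℝ) :
    fderiv ℝ (fun W => fderiv ℝ G W v) Y Y = 0 := by
  have hconst : (fun s : ℝ => fderiv ℝ G ((1 + s) • Y) v) =ᶠ[𝓝 (0:ℝ)]
      (fun _ => fderiv ℝ G Y v) := by
    have : Ioi (-1:ℝ) ∈ 𝓝 (0:ℝ) := Ioi_mem_nhds (by norm_num)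
    filter_upwards [this] with s hs
    have h1s : (0:ℝ) < 1 + s := by simpa [mem_Ioi] using (by linarith [mem_Ioi.mp hs] : (0:ℝ) < 1 + s)
    rw [fderiv_ray hGs hGhom hY h1s]
  have hd0 : HasDerivAt (fun s : ℝ => fderiv ℝ G ((1 + s) • Y) v) 0 0 := by
    exact (hasDerivAt_const (0:ℝ) (fderiv ℝ G Y v)).congr_of_eventuallyEq hconst
  have hray : HasDerivAt (fun s : ℝ => (1 + s) • Y) Y 0 := by
    simpa using ((hasDerivAt_id (0:ℝ)).const_add 1).smul_const Y
  have hcomp : HasDerivAt (fun s : ℝ => fderiv ℝ G ((1 + s) • Y) v)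
      (fderiv ℝ (fun W => fderiv ℝ G W v) Y Y) 0 := by
    have hmem : (1 + (0:ℝ)) • Y = Y := by norm_num
    have hF : HasFDerivAt (fun W => fderiv ℝ G W v)
        (fderiv ℝ (fun W => fderiv ℝ G W v) Y) ((fun s : ℝ => (1 + s) • Y) 0) := by
      simp only [hmem]
      exact (gdir_hasFDerivAt hGs hY v).fderiv ▸ (gdir_hasFDerivAt hGs hY v)
    exact hF.comp_hasDerivAt 0 hray
  exact (hcomp.unique hd0)

end second

lemma clm_eq_sum (L : (ι → ℝ) →L[ℝ] ℝ) (u : ι → ℝ) :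
    L u = ∑ i, u i * L (Pi.single i 1) := by
  have hrep : u = ∑ i, u i • (Pi.single i (1:ℝ) : ι → ℝ) := by
    ext j; simp [Pi.single_apply]
  conv_lhs => rw [hrep]
  rw [map_sum]
  simp [smul_eq_mul]

lemma quad_nonneg {H : ι → ι → ℝ} {Y w : ι → ℝ} (hY : ∀ i, 0 < Y i)
    (hsym : ∀ i j, H i j = H j i)
    (heuler : ∀ i, ∑ j, H i j * Y j = 0)
    (hsign : ∀ i j, i ≠ j → H i j ≤ 0) :
    0 ≤ ∑ i, ∑ j, H i j * w i * w j := by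
  set A : ι → ι → ℝ := fun i j => H i j * (w i * w j - w i ^ 2 * Y j / Y i) with hA
  have h1 : ∑ i, ∑ j, A i j = ∑ i, ∑ j, H i j * w i * w j := by
    refine Finset.sum_congr rfl fun i _ => ?_
    have h1a : ∑ j, A i j = (∑ j, H i j * w i * w j) - w i ^ 2 / Y i * ∑ j, H i j * Y j := by
      rw [Finset.mul_sum, ← Finset.sum_sub_distrib]
      refine Finset.sum_congr rfl fun j _ => ?_
      simp only [hA]; ring
    rw [h1a, heuler i, mul_zero, sub_zero]
  have h2 : ∀ i j, 0 ≤ A i j + A j i := by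
    intro i j
    rcases eq_or_ne i j with rfl | hij
    · have hz : A i i = 0 := by
        simp only [hA]
        rw [mul_div_assoc, div_self (hY i).ne', mul_one]
        ring
      rw [hz]; norm_num
    · have hYi := (hY i).ne'
      have hYj := (hY j).ne'
      have key : A i j + A j i = -H i j * ((w i * Y j - w j * Y i) ^ 2 / (Y i * Y j)) := by
        simp only [hA, hsym j i]
        field_simp
        ring
      rw [key]
      exact mul_nonneg (neg_nonneg.mpr (hsign i j hij))
        (div_nonneg (sq_nonneg _) (le_of_lt (mul_pos (hY i) (hY j))))
  have h3 : 0 ≤ ∑ i, ∑ j, (A i j + A j i) :=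
    Finset.sum_nonneg fun i _ => Finset.sum_nonneg fun j _ => h2 i j
  have h4 : ∑ i, ∑ j, (A i j + A j i) = 2 * ∑ i, ∑ j, A i j := by
    rw [show ∑ i, ∑ j, (A i j + A j i) = (∑ i, ∑ j, A i j) + ∑ i, ∑ j, A j i by
      rw [← Finset.sum_add_distrib]
      exact Finset.sum_congr rfl fun i _ => by rw [← Finset.sum_add_distrib]]
    rw [Finset.sum_comm (f := fun i j => A j i)]
    ring
  rw [← h1]
  nlinarith [h3, h4]

section convex
variable [Nonempty ι]
variable (hGs : ContDiffOn ℝ 2 G (orth ι))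
    (hGhom : ∀ lam : ℝ, 0 < lam → ∀ Y : ι → ℝ, (∀ i, 0 < Y i) → G (lam • Y) = lam * G Y)
    (hGd1 : ∀ Y : ι → ℝ, (∀ i, 0 < Y i) → ∀ i, 0 < fderiv ℝ G Y (Pi.single i 1))
    (hGd2 : ∀ Y : ι → ℝ, (∀ i, 0 < Y i) → ∀ i j, i ≠ j →
      fderiv ℝ (fun W => fderiv ℝ G W (Pi.single i 1)) Y (Pi.single j 1) ≤ 0)

include hGs hGhom hGd1 hGd2 in
lemma line_convex (x v : ι → ℝ) :
    ConvexOn ℝ univ (fun t : ℝ => G (fun i => exp (x i + t * v i))) := by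
  classical
  set Yt : ℝ → (ι → ℝ) := fun t i => exp (x i + t * v i) with hYt
  have hYmem : ∀ t, Yt t ∈ orth ι := fun t i => exp_pos _
  set q : ℝ → ℝ := fun t => G (Yt t) with hq_def
  set w : ℝ → (ι → ℝ) := fun t i => exp (x i + t * v i) * v i with hw
  have hYd : ∀ t, HasDerivAt Yt (w t) t := by
    intro t
    rw [hasDerivAt_pi]
    intro i
    have h1 : HasDerivAt (fun t : ℝ => x i + t * v i) (v i) t := by
      simpa using ((hasDerivAt_id t).mul_const (v i)).const_add (x i)
    simpa [hw, mul_comm] using h1.exp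
  set A : ℝ → ℝ := fun t => fderiv ℝ G (Yt t) (w t) with hA
  have hqd : ∀ t, HasDerivAt q (A t) t := fun t =>
    (diffAt hGs (hYmem t)).hasFDerivAt.comp_hasDerivAt t (hYd t)
  -- second derivative
  set B : ℝ → ℝ := fun t => ∑ i, (w t i * v i * fderiv ℝ G (Yt t) (Pi.single i 1)
      + w t i * ∑ j, w t j *
        fderiv ℝ (fun W => fderiv ℝ G W (Pi.single i 1)) (Yt t) (Pi.single j 1)) with hB
  have hAd : ∀ t, HasDerivAt A (B t) t := by
    intro t
    have hAsum : A = fun t => ∑ i, w t i * fderiv ℝ G (Yt t) (Pi.single i 1) := by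
      funext s
      simp only [hA]
      exact clm_eq_sum _ _
    rw [hAsum]
    have hterm : ∀ i : ι, HasDerivAt (fun s => w s i * fderiv ℝ G (Yt s) (Pi.single i 1))
        (w t i * v i * fderiv ℝ G (Yt t) (Pi.single i 1)
          + w t i * ∑ j, w t j *
            fderiv ℝ (fun W => fderiv ℝ G W (Pi.single i 1)) (Yt t) (Pi.single j 1)) t := by
      intro i
      have hw1 : HasDerivAt (fun s => w s i) (w t i * v i) t := by
        have h1 : HasDerivAt (fun s : ℝ => x i + s * v i) (v i) t := by
          simpa using ((hasDerivAt_id t).mul_const (v i)).const_add (x i)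
        have := (h1.exp).mul_const (v i)
        simpa [hw, mul_comm, mul_assoc, mul_left_comm] using this
      have hg1 : HasDerivAt (fun s => fderiv ℝ G (Yt s) (Pi.single i 1))
          (∑ j, w t j *
            fderiv ℝ (fun W => fderiv ℝ G W (Pi.single i 1)) (Yt t) (Pi.single j 1)) t := by
        have hcomp : HasDerivAt (fun s => fderiv ℝ G (Yt s) (Pi.single i 1))
            (fderiv ℝ (fun W => fderiv ℝ G W (Pi.single i 1)) (Yt t) (w t)) t := by
          have hF := gdir_hasFDerivAt hGs (hYmem t) (Pi.single i 1)
          have := hF.comp_hasDerivAt t (hYd t)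
          rw [(gdir_hasFDerivAt hGs (hYmem t) (Pi.single i 1)).fderiv]
          exact this
        have hex : fderiv ℝ (fun W => fderiv ℝ G W (Pi.single i 1)) (Yt t) (w t)
            = ∑ j, w t j *
              fderiv ℝ (fun W => fderiv ℝ G W (Pi.single i 1)) (Yt t) (Pi.single j 1) :=
          clm_eq_sum _ _
        rw [← hex]
        exact hcomp
      simpa [mul_comm, mul_assoc, mul_left_comm] using hw1.fun_mul hg1
    simpa [hB] using HasDerivAt.fun_sum (fun i _ => hterm i)
  have hBnn : ∀ t, 0 ≤ B t := by
    intro t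
    have hsplit : B t = (∑ i, w t i * v i * fderiv ℝ G (Yt t) (Pi.single i 1))
        + ∑ i, ∑ j, (fderiv ℝ (fun W => fderiv ℝ G W (Pi.single i 1)) (Yt t) (Pi.single j 1))
          * w t i * w t j := by
      simp only [hB]
      rw [Finset.sum_add_distrib]
      congr 1
      refine Finset.sum_congr rfl fun i _ => ?_
      rw [Finset.mul_sum]
      exact Finset.sum_congr rfl fun j _ => by ring
    rw [hsplit]
    have h1 : 0 ≤ ∑ i, w t i * v i * fderiv ℝ G (Yt t) (Pi.single i 1) := by
      refine Finset.sum_nonneg fun i _ => ?_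
      have : w t i * v i = exp (x i + t * v i) * (v i)^2 := by rw [hw]; ring
      rw [this]
      exact mul_nonneg (mul_nonneg (le_of_lt (exp_pos _)) (sq_nonneg _))
        (le_of_lt (hGd1 (Yt t) (hYmem t) i))
    have h2 : 0 ≤ ∑ i, ∑ j,
        (fderiv ℝ (fun W => fderiv ℝ G W (Pi.single i 1)) (Yt t) (Pi.single j 1))
          * w t i * w t j := by
      refine quad_nonneg (hYmem t) ?_ ?_ ?_
      · intro i j
        rw [gdir_fderiv hGs (hYmem t), gdir_fderiv hGs (hYmem t)]
        exact sd_symm hGs (hYmem t) _ _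
      · intro i
        have : ∑ j, fderiv ℝ (fun W => fderiv ℝ G W (Pi.single i 1)) (Yt t) (Pi.single j 1)
            * Yt t j = fderiv ℝ (fun W => fderiv ℝ G W (Pi.single i 1)) (Yt t) (Yt t) := by
          rw [clm_eq_sum (fderiv ℝ (fun W => fderiv ℝ G W (Pi.single i 1)) (Yt t)) (Yt t)]
          exact Finset.sum_congr rfl fun j _ => by ring
        rw [this]
        exact gdir_fderiv_self hGs hGhom (hYmem t) _
      · intro i j hij
        exact hGd2 (Yt t) (hYmem t) i j hij
    linarith
  -- convexity via second derivative
  have hderiv1 : deriv q = A := funext fun t => (hqd t).deriv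
  have hconv : ConvexOn ℝ univ q := by
    refine convexOn_of_deriv2_nonneg convex_univ ?_ ?_ ?_ ?_
    · exact fun t _ => ((hqd t).differentiableAt).continuousAt.continuousWithinAt
    · exact fun t _ => ((hqd t).differentiableAt).differentiableWithinAt
    · rw [interior_univ, hderiv1]
      exact fun t _ => ((hAd t).differentiableAt).differentiableWithinAt
    · intro t _
      have : deriv^[2] q t = deriv (deriv q) t := rfl
      rw [this, hderiv1, (hAd t).deriv]
      exact hBnn t
  exact hconv

include hGs hGhom hGd1 hGd2 in
lemma exp_convex : ConvexOn ℝ univ (fun x : ι → ℝ => G (fun i => exp (x i))) := by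
  refine ⟨convex_univ, ?_⟩
  intro x _ y _ s t hs ht hst
  have hline := line_convex hGs hGhom hGd1 hGd2 x (y - x)
  have h01 := hline.2 (mem_univ (0:ℝ)) (mem_univ (1:ℝ)) hs ht hst
  have he0 : (fun i => exp (x i + (s * 0 + t * 1) * (y - x) i)) =
      fun i => exp ((s • x + t • y) i) := by
    funext i
    congr 1
    simp only [Pi.add_apply, Pi.smul_apply, Pi.sub_apply, smul_eq_mul]
    have : s = 1 - t := by linarith
    rw [this]; ring
  have he1 : (fun i => exp (x i + 0 * (y - x) i)) = fun i => exp (x i) := by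
    funext i; norm_num
  have he2 : (fun i => exp (x i + 1 * (y - x) i)) = fun i => exp (y i) := by
    funext i; simp
  simp only [smul_eq_mul] at h01
  rw [he0] at h01
  rw [he1, he2] at h01
  exact h01

end convex

/-! ### Per-type minimum family -/

noncomputable def Fz (G : (ι → ℝ) → ℝ) (c : ι → ℝ) (z : ℝ)
    (ab : (ι → ℝ) × (ι → ℝ)) : ℝ :=
  G fun i => exp (ab.1 i - ab.2 i * (z + c i))

section family
variable [Nonempty ι]
variable (hGs : ContDiffOn ℝ 2 G (orth ι))
    (hGhom : ∀ lam : ℝ, 0 < lam → ∀ Y : ι → ℝ, (∀ i, 0 < Y i) → G (lam • Y) = lam * G Y)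
    (hGd1 : ∀ Y : ι → ℝ, (∀ i, 0 < Y i) → ∀ i, 0 < fderiv ℝ G Y (Pi.single i 1))
    (hGd2 : ∀ Y : ι → ℝ, (∀ i, 0 < Y i) → ∀ i j, i ≠ j →
      fderiv ℝ (fun W => fderiv ℝ G W (Pi.single i 1)) Y (Pi.single j 1) ≤ 0)
    {A : Set ((ι → ℝ) × (ι → ℝ))} {c : ι → ℝ}
    (hAne : A.Nonempty) (hAconv : Convex ℝ A) (hAcomp : IsCompact A)
    (hAb : ∀ ab ∈ A, ∃ β : ℝ, 0 < β ∧ ∀ i, ab.2 i = β)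

include hGs hGhom hGd1 in
lemma Fz_pos (z : ℝ) (ab : (ι → ℝ) × (ι → ℝ)) : 0 < Fz G c z ab :=
  G_pos hGs hGhom hGd1 (fun i => exp_pos _)

include hGhom in
lemma Fz_exp {ab : (ι → ℝ) × (ι → ℝ)} {β : ℝ} (hβpos : 0 < β) (hβ : ∀ i, ab.2 i = β)
    (z z' : ℝ) : Fz G c z' ab = exp (-β * (z' - z)) * Fz G c z ab := by
  have key : (fun i => exp (ab.1 i - ab.2 i * (z' + c i)))
      = exp (-β * (z' - z)) • (fun i => exp (ab.1 i - ab.2 i * (z + c i))) := by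
    funext i
    simp only [Pi.smul_apply, smul_eq_mul, ← exp_add, hβ i]
    congr 1
    ring
  rw [Fz, key, hGhom _ (exp_pos _) _ (fun i => exp_pos _)]
  rfl

lemma Fz_cont (z : ℝ) (hGs : ContDiffOn ℝ 2 G (orth ι)) :
    Continuous (fun ab => Fz G c z ab) := by
  rw [continuous_iff_continuousAt]
  intro ab
  have hin : Continuous fun ab : (ι → ℝ) × (ι → ℝ) =>
      (fun i => exp (ab.1 i - ab.2 i * (z + c i))) := by
    refine continuous_pi fun i => ?_
    exact ((continuous_apply i).comp continuous_fst).sub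
      (((continuous_apply i).comp continuous_snd).mul continuous_const) |>.rexp
  exact (contAt hGs (fun i => exp_pos _)).comp hin.continuousAt

include hGs hAne hAcomp in
lemma exists_min (z : ℝ) : ∃ ab ∈ A, ∀ ab' ∈ A, Fz G c z ab ≤ Fz G c z ab' := by
  obtain ⟨ab, habA, hmin⟩ := hAcomp.exists_isMinOn hAne (Fz_cont z hGs).continuousOn
  exact ⟨ab, habA, fun ab' hab' => hmin hab'⟩

lemma ghat_eq {z : ℝ} {ab : (ι → ℝ) × (ι → ℝ)} (hab : ab ∈ A)
    (hmin : ∀ ab' ∈ A, Fz G c z ab ≤ Fz G c z ab') :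
    sInf (Fz G c z '' A) = Fz G c z ab :=
  IsLeast.csInf_eq ⟨⟨ab, hab, rfl⟩, fun y ⟨ab', hab', he⟩ => he ▸ hmin ab' hab'⟩

include hGs hGhom hGd1 hGd2 hAconv in
lemma Fz_convexOn (z : ℝ) : ConvexOn ℝ A (Fz G c z) := by
  have hF := exp_convex hGs hGhom hGd1 hGd2
  refine ⟨hAconv, ?_⟩
  intro p hp q hq s t hs ht hst
  have h2 := hF.2 (mem_univ (fun i => p.1 i - p.2 i * (z + c i)))
    (mem_univ (fun i => q.1 i - q.2 i * (z + c i))) hs ht hst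
  have he : (fun i => (s • p + t • q).1 i - (s • p + t • q).2 i * (z + c i))
      = (s • (fun i => p.1 i - p.2 i * (z + c i))
        + t • (fun i => q.1 i - q.2 i * (z + c i)) : ι → ℝ) := by
    funext i
    simp only [Prod.fst_add, Prod.snd_add, Prod.smul_fst, Prod.smul_snd, Pi.add_apply,
      Pi.smul_apply, smul_eq_mul]
    ring
  show G (fun i => exp ((fun i => (s • p + t • q).1 i - (s • p + t • q).2 i * (z + c i)) i))
      ≤ _
  rw [he]
  exact h2

end family

/-- `Rrel z β` : some minimizer of `Fz G c z` over `A` has constant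
price-sensitivity `β`. -/
def Rrel (G : (ι → ℝ) → ℝ) (c : ι → ℝ) (A : Set ((ι → ℝ) × (ι → ℝ)))
    (z β : ℝ) : Prop :=
  ∃ ab ∈ A, (∀ ab' ∈ A, Fz G c z ab ≤ Fz G c z ab') ∧ ∀ i, ab.2 i = β

noncomputable def gh (G : (ι → ℝ) → ℝ) (c : ι → ℝ) (A : Set ((ι → ℝ) × (ι → ℝ)))
    (z : ℝ) : ℝ := sInf (Fz G c z '' A)

section family2
variable [Nonempty ι]
variable (hGs : ContDiffOn ℝ 2 G (orth ι))
    (hGhom : ∀ lam : ℝ, 0 < lam → ∀ Y : ι → ℝ, (∀ i, 0 < Y i) → G (lam • Y) = lam * G Y)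
    (hGd1 : ∀ Y : ι → ℝ, (∀ i, 0 < Y i) → ∀ i, 0 < fderiv ℝ G Y (Pi.single i 1))
    (hGd2 : ∀ Y : ι → ℝ, (∀ i, 0 < Y i) → ∀ i j, i ≠ j →
      fderiv ℝ (fun W => fderiv ℝ G W (Pi.single i 1)) Y (Pi.single j 1) ≤ 0)
    {A : Set ((ι → ℝ) × (ι → ℝ))} {c : ι → ℝ}
    (hAne : A.Nonempty) (hAconv : Convex ℝ A) (hAcomp : IsCompact A)
    (hAb : ∀ ab ∈ A, ∃ β : ℝ, 0 < β ∧ ∀ i, ab.2 i = β)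

/-- the common price-sensitivity extraction map -/
noncomputable def bet (ab : (ι → ℝ) × (ι → ℝ)) : ℝ := ab.2 (Classical.arbitrary ι)

lemma bet_cont : Continuous (bet (ι := ι)) :=
  (continuous_apply _).comp continuous_snd

include hAb in
lemma bet_eq {ab : (ι → ℝ) × (ι → ℝ)} (hab : ab ∈ A) : ∀ i, ab.2 i = bet ab := by
  obtain ⟨β, hβpos, hβ⟩ := hAb ab hab
  intro i; rw [hβ i, bet, hβ]

include hAb in
lemma bet_pos {ab : (ι → ℝ) × (ι → ℝ)} (hab : ab ∈ A) : 0 < bet ab := by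
  obtain ⟨β, hβpos, hβ⟩ := hAb ab hab
  rw [bet, hβ]; exact hβpos

include hAne hAcomp hAb in
lemma exists_bB : ∃ b B : ℝ, 0 < b ∧ ∀ ab ∈ A, b ≤ bet ab ∧ bet ab ≤ B := by
  obtain ⟨ablo, hlo, hmin⟩ := hAcomp.exists_isMinOn hAne bet_cont.continuousOn
  obtain ⟨abhi, hhi, hmax⟩ := hAcomp.exists_isMaxOn hAne bet_cont.continuousOn
  exact ⟨bet ablo, bet abhi, bet_pos hAb hlo, fun ab hab => ⟨hmin hab, hmax hab⟩⟩

include hGs hGhom hAne hAcomp hAb in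
lemma Rrel_maj {z β : ℝ} (h : Rrel G c A z β) (z' : ℝ) :
    gh G c A z' ≤ exp (-β * (z' - z)) * gh G c A z := by
  obtain ⟨ab, hab, hmin, hβ⟩ := h
  obtain ⟨β', hβ'pos, hβ'⟩ := hAb ab hab
  have hββ' : β = β' := by rw [← hβ (Classical.arbitrary ι), hβ' (Classical.arbitrary ι)]
  subst hββ'
  obtain ⟨ab', hab', hmin'⟩ := exists_min hGs hAne hAcomp z'
  rw [gh, ghat_eq hab' hmin', gh, ghat_eq hab hmin]
  calc Fz G c z' ab' ≤ Fz G c z' ab := hmin' ab hab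
    _ = exp (-β * (z' - z)) * Fz G c z ab := Fz_exp hGhom hβ'pos hβ z z'

include hGs hGhom hGd1 hAne hAcomp in
lemma gh_pos (z : ℝ) : 0 < gh G c A z := by
  obtain ⟨ab, hab, hmin⟩ := exists_min hGs hAne hAcomp z
  rw [gh, ghat_eq hab hmin]
  exact Fz_pos hGs hGhom hGd1 z ab

include hGs hAne hAcomp hAb in
lemma Rrel_nonempty (z : ℝ) : ∃ β, Rrel G c A z β := by
  obtain ⟨ab, hab, hmin⟩ := exists_min hGs hAne hAcomp z
  exact ⟨bet ab, ab, hab, hmin, bet_eq hAb hab⟩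

include hAb in
lemma Rrel_bet {z β : ℝ} (h : Rrel G c A z β) : ∃ ab ∈ A, bet ab = β
    ∧ (∀ ab' ∈ A, Fz G c z ab ≤ Fz G c z ab') := by
  obtain ⟨ab, hab, hmin, hβ⟩ := h
  exact ⟨ab, hab, by rw [← hβ (Classical.arbitrary ι), bet], hmin⟩

include hGs hGhom hGd1 hAb in
lemma Rrel_mono {z z' β β' : ℝ} (hzz : z < z') (h : Rrel G c A z β)
    (h' : Rrel G c A z' β') : β ≤ β' := by
  obtain ⟨ab, hab, hmin, hβ⟩ := h
  obtain ⟨ab', hab', hmin', hβ'⟩ := h'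
  obtain ⟨b1, hb1, hc1⟩ := hAb ab hab
  obtain ⟨b2, hb2, hc2⟩ := hAb ab' hab'
  have he1 : β = b1 := by rw [← hβ (Classical.arbitrary ι), hc1]
  have he2 : β' = b2 := by rw [← hβ' (Classical.arbitrary ι), hc2]
  subst he1; subst he2
  -- multiply the two minimality inequalities
  have h1 : Fz G c z ab ≤ Fz G c z ab' := hmin ab' hab'
  have h2 : Fz G c z' ab' ≤ Fz G c z' ab := hmin' ab hab
  rw [Fz_exp hGhom hb2 hc2 z z', Fz_exp hGhom hb1 hc1 z z'] at h2
  have hpos := Fz_pos (c := c) hGs hGhom hGd1 z ab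
  have hexp : exp (-β' * (z' - z)) * Fz G c z ab ≤ exp (-β * (z' - z)) * Fz G c z ab := by
    calc exp (-β' * (z' - z)) * Fz G c z ab
        ≤ exp (-β' * (z' - z)) * Fz G c z ab' :=
          mul_le_mul_of_nonneg_left h1 (exp_pos _).le
      _ ≤ exp (-β * (z' - z)) * Fz G c z ab := h2
  have := (mul_le_mul_iff_of_pos_right hpos).mp hexp
  have hle := exp_le_exp.mp this
  nlinarith
include hGs hGhom hGd1 hGd2 hAconv hAb in
lemma Rrel_interval {z β1 β2 β : ℝ} (h1 : Rrel G c A z β1) (h2 : Rrel G c A z β2)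
    (hb1 : β1 ≤ β) (hb2 : β ≤ β2) : Rrel G c A z β := by
  obtain ⟨ab1, hab1, hmin1, hc1⟩ := h1
  obtain ⟨ab2, hab2, hmin2, hc2⟩ := h2
  rcases eq_or_lt_of_le (hb1.trans hb2) with heq | hlt
  · -- β1 = β2, so β = β1
    have : β = β1 := le_antisymm (heq ▸ hb2) hb1
    exact this ▸ ⟨ab1, hab1, hmin1, hc1⟩
  · set θ : ℝ := (β2 - β) / (β2 - β1) with hθ
    have hd : 0 < β2 - β1 := by linarith
    have hθ0 : 0 ≤ θ := div_nonneg (by linarith) hd.le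
    have hθ1 : θ ≤ 1 := (div_le_one hd).mpr (by linarith)
    set ab := θ • ab1 + (1 - θ) • ab2 with habd
    have habA : ab ∈ A := hAconv hab1 hab2 hθ0 (by linarith) (by ring)
    have hval : Fz G c z ab ≤ Fz G c z ab1 := by
      have hcx := (Fz_convexOn hGs hGhom hGd1 hGd2 hAconv (c := c) z).2
        hab1 hab2 hθ0 (by linarith : (0:ℝ) ≤ 1 - θ) (by ring)
      have heq1 : Fz G c z ab1 = Fz G c z ab2 :=
        le_antisymm (hmin1 ab2 hab2) (hmin2 ab1 hab1)
      calc Fz G c z ab ≤ θ * Fz G c z ab1 + (1 - θ) * Fz G c z ab2 := hcx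
        _ = Fz G c z ab1 := by rw [← heq1]; ring
    refine ⟨ab, habA, fun ab' hab' => le_trans hval (hmin1 ab' hab'), fun i => ?_⟩
    have hdef : ab.2 i = θ * ab1.2 i + (1 - θ) * ab2.2 i := rfl
    have hx : θ * (β2 - β1) = β2 - β := by rw [hθ]; field_simp
    have hy : θ * β1 + (1 - θ) * β2 = β2 - θ * (β2 - β1) := by ring
    rw [hdef, hc1 i, hc2 i, hy, hx]
    ring

include hGs hGhom hGd1 hAne hAcomp hAb in
lemma exists_hi (z : ℝ) : ∃ βmax, Rrel G c A z βmax ∧ (∀ β, Rrel G c A z β → β ≤ βmax) ∧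
    ∀ ε > 0, ∃ δ > 0, ∀ Δ ∈ Ioc (0:ℝ) δ,
      exp (-(βmax + ε) * Δ) * gh G c A z ≤ gh G c A (z + Δ) := by
  obtain ⟨b, Bb, hbpos, hbB⟩ := exists_bB hAne hAcomp hAb
  obtain ⟨ab0, hab0, hmin0⟩ := exists_min (c := c) hGs hAne hAcomp z
  have hghz : gh G c A z = Fz G c z ab0 := ghat_eq hab0 hmin0
  have hghpos : 0 < gh G c A z := gh_pos hGs hGhom hGd1 hAne hAcomp z
  set M : Set ((ι → ℝ) × (ι → ℝ)) := A ∩ {ab | Fz G c z ab ≤ gh G c A z} with hM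
  have hMchar : ∀ ab, ab ∈ M ↔ (ab ∈ A ∧ ∀ ab' ∈ A, Fz G c z ab ≤ Fz G c z ab') := by
    intro ab
    constructor
    · rintro ⟨h1, h2⟩
      exact ⟨h1, fun ab' hab' => le_trans h2 (hghz ▸ hmin0 ab' hab')⟩
    · rintro ⟨h1, h2⟩
      exact ⟨h1, by rw [mem_setOf_eq, hghz]; exact h2 ab0 hab0⟩
  have hMcomp : IsCompact M := hAcomp.inter_right (isClosed_le (Fz_cont z hGs) continuous_const)
  have hMne : M.Nonempty := ⟨ab0, (hMchar ab0).mpr ⟨hab0, hmin0⟩⟩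
  obtain ⟨abmax, habmaxM, hmax⟩ := hMcomp.exists_isMaxOn hMne bet_cont.continuousOn
  have habmax := (hMchar abmax).mp habmaxM
  set βmax := bet abmax with hβmax
  refine ⟨βmax, ⟨abmax, habmax.1, habmax.2, bet_eq hAb habmax.1⟩, ?_, ?_⟩
  · intro β hβ
    obtain ⟨ab, hab, hbetab, hmin⟩ := Rrel_bet hAb hβ
    rw [← hbetab]
    exact hmax ((hMchar ab).mpr ⟨hab, hmin⟩)
  · intro ε hε
    have hball0 : ∀ ab ∈ A, bet ab < βmax + ε → ∀ Δ : ℝ, 0 ≤ Δ →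
        exp (-(βmax + ε) * Δ) * gh G c A z ≤ Fz G c (z + Δ) ab := by
      intro ab hab hc Δ hΔ0
      have hfe : Fz G c (z + Δ) ab = exp (-(bet ab) * Δ) * Fz G c z ab := by
        simpa using Fz_exp (c := c) hGhom (bet_pos hAb hab) (bet_eq hAb hab) z (z + Δ)
      have h1 : gh G c A z ≤ Fz G c z ab := by rw [hghz]; exact hmin0 ab hab
      have h2 : exp (-(βmax + ε) * Δ) ≤ exp (-(bet ab) * Δ) := by
        apply exp_le_exp.mpr
        have := mul_le_mul_of_nonneg_right (by linarith : -(βmax + ε) ≤ -(bet ab)) hΔ0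
        linarith
      rw [hfe]
      exact mul_le_mul h2 h1 hghpos.le (exp_pos _).le
    set Aε : Set ((ι → ℝ) × (ι → ℝ)) := A ∩ {ab | βmax + ε ≤ bet ab} with hAε
    by_cases hne : Aε.Nonempty
    · have hAεcomp : IsCompact Aε :=
        hAcomp.inter_right (isClosed_le continuous_const bet_cont)
      obtain ⟨abε, habε, hminε⟩ := hAεcomp.exists_isMinOn hne (Fz_cont z hGs).continuousOn
      have hgt : gh G c A z < Fz G c z abε := by
        rcases lt_or_ge (gh G c A z) (Fz G c z abε) with h | h
        · exact h
        · exfalso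
          have habεM : abε ∈ M := ⟨habε.1, h⟩
          have hub : bet abε ≤ βmax := hmax habεM
          have hlb : βmax + ε ≤ bet abε := habε.2
          linarith
      set ρ := Fz G c z abε / gh G c A z with hρ
      have hρ1 : 1 < ρ := (one_lt_div hghpos).mpr hgt
      set K := max (Bb - βmax - ε) 1 with hK
      have hKpos : 0 < K := lt_of_lt_of_le one_pos (le_max_right _ _)
      refine ⟨Real.log ρ / K, div_pos (Real.log_pos hρ1) hKpos, ?_⟩
      rintro Δ ⟨hΔ0, hΔδ⟩
      have hball : ∀ ab ∈ A, exp (-(βmax + ε) * Δ) * gh G c A z ≤ Fz G c (z + Δ) ab := by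
        intro ab hab
        rcases lt_or_ge (bet ab) (βmax + ε) with hc | hc
        · exact hball0 ab hab hc Δ hΔ0.le
        · have habε' : ab ∈ Aε := ⟨hab, hc⟩
          have hfe : Fz G c (z + Δ) ab = exp (-(bet ab) * Δ) * Fz G c z ab := by
            simpa using Fz_exp (c := c) hGhom (bet_pos hAb hab) (bet_eq hAb hab) z (z + Δ)
          have h1 : Fz G c z abε ≤ Fz G c z ab := hminε habε'
          have h2 : exp (-Bb * Δ) ≤ exp (-(bet ab) * Δ) := by
            apply exp_le_exp.mpr
            have := mul_le_mul_of_nonneg_right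
              (by linarith [(hbB ab hab).2] : -Bb ≤ -(bet ab)) hΔ0.le
            linarith
          have hkey : exp (-(βmax + ε) * Δ) * gh G c A z ≤ exp (-Bb * Δ) * Fz G c z abε := by
            have hFρ : Fz G c z abε = ρ * gh G c A z := by
              rw [hρ]; field_simp
            rw [hFρ, show exp (-Bb*Δ) * (ρ * gh G c A z) = (exp (-Bb*Δ) * ρ) * gh G c A z
              from by ring]
            apply mul_le_mul_of_nonneg_right _ hghpos.le
            rw [show -(βmax+ε)*Δ = -Bb*Δ + (Bb - βmax - ε)*Δ from by ring, exp_add]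
            apply mul_le_mul_of_nonneg_left _ (exp_pos _).le
            rw [← Real.exp_log (lt_trans one_pos hρ1)]
            apply exp_le_exp.mpr
            calc (Bb - βmax - ε) * Δ ≤ K * Δ :=
                  mul_le_mul_of_nonneg_right (le_max_left _ _) hΔ0.le
              _ ≤ K * (Real.log ρ / K) := mul_le_mul_of_nonneg_left hΔδ hKpos.le
              _ = Real.log ρ := by field_simp
          calc exp (-(βmax + ε) * Δ) * gh G c A z ≤ exp (-Bb*Δ) * Fz G c z abε := hkey
            _ ≤ exp (-(bet ab) * Δ) * Fz G c z abε :=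
                mul_le_mul_of_nonneg_right h2 (Fz_pos hGs hGhom hGd1 z abε).le
            _ ≤ exp (-(bet ab) * Δ) * Fz G c z ab :=
                mul_le_mul_of_nonneg_left h1 (exp_pos _).le
            _ = Fz G c (z + Δ) ab := hfe.symm
      obtain ⟨abΔ, habΔ, hminΔ⟩ := exists_min (c := c) hGs hAne hAcomp (z + Δ)
      rw [show gh G c A (z + Δ) = Fz G c (z + Δ) abΔ from ghat_eq habΔ hminΔ]
      exact hball abΔ habΔ
    · refine ⟨1, one_pos, ?_⟩
      rintro Δ ⟨hΔ0, hΔδ⟩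
      obtain ⟨abΔ, habΔ, hminΔ⟩ := exists_min (c := c) hGs hAne hAcomp (z + Δ)
      rw [show gh G c A (z + Δ) = Fz G c (z + Δ) abΔ from ghat_eq habΔ hminΔ]
      refine hball0 abΔ habΔ ?_ Δ hΔ0.le
      by_contra hcon
      exact hne ⟨abΔ, habΔ, le_of_not_gt hcon⟩

include hGs hGhom hGd1 hAne hAcomp hAb in
lemma exists_lo (z : ℝ) : ∃ βmin, Rrel G c A z βmin ∧ (∀ β, Rrel G c A z β → βmin ≤ β) ∧
    ∀ ε > 0, ∃ δ > 0, ∀ Δ ∈ Ioc (0:ℝ) δ,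
      exp ((βmin - ε) * Δ) * gh G c A z ≤ gh G c A (z - Δ) := by
  obtain ⟨b, Bb, hbpos, hbB⟩ := exists_bB hAne hAcomp hAb
  obtain ⟨ab0, hab0, hmin0⟩ := exists_min (c := c) hGs hAne hAcomp z
  have hghz : gh G c A z = Fz G c z ab0 := ghat_eq hab0 hmin0
  have hghpos : 0 < gh G c A z := gh_pos hGs hGhom hGd1 hAne hAcomp z
  set M : Set ((ι → ℝ) × (ι → ℝ)) := A ∩ {ab | Fz G c z ab ≤ gh G c A z} with hM
  have hMchar : ∀ ab, ab ∈ M ↔ (ab ∈ A ∧ ∀ ab' ∈ A, Fz G c z ab ≤ Fz G c z ab') := by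
    intro ab
    constructor
    · rintro ⟨h1, h2⟩
      exact ⟨h1, fun ab' hab' => le_trans h2 (hghz ▸ hmin0 ab' hab')⟩
    · rintro ⟨h1, h2⟩
      exact ⟨h1, by rw [mem_setOf_eq, hghz]; exact h2 ab0 hab0⟩
  have hMcomp : IsCompact M := hAcomp.inter_right (isClosed_le (Fz_cont z hGs) continuous_const)
  have hMne : M.Nonempty := ⟨ab0, (hMchar ab0).mpr ⟨hab0, hmin0⟩⟩
  obtain ⟨abmin, habminM, hminM⟩ := hMcomp.exists_isMinOn hMne bet_cont.continuousOn
  have habmin := (hMchar abmin).mp habminM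
  set βmin := bet abmin with hβmin
  refine ⟨βmin, ⟨abmin, habmin.1, habmin.2, bet_eq hAb habmin.1⟩, ?_, ?_⟩
  · intro β hβ
    obtain ⟨ab, hab, hbetab, hmin⟩ := Rrel_bet hAb hβ
    rw [← hbetab]
    exact hminM ((hMchar ab).mpr ⟨hab, hmin⟩)
  · intro ε hε
    have hball0 : ∀ ab ∈ A, βmin - ε ≤ bet ab → ∀ Δ : ℝ, 0 ≤ Δ →
        exp ((βmin - ε) * Δ) * gh G c A z ≤ Fz G c (z - Δ) ab := by
      intro ab hab hc Δ hΔ0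
      have hfe : Fz G c (z - Δ) ab = exp (bet ab * Δ) * Fz G c z ab := by
        have := Fz_exp (c := c) hGhom (bet_pos hAb hab) (bet_eq hAb hab) z (z - Δ)
        rw [this]
        congr 1
        · congr 1; ring
      have h1 : gh G c A z ≤ Fz G c z ab := by rw [hghz]; exact hmin0 ab hab
      have h2 : exp ((βmin - ε) * Δ) ≤ exp (bet ab * Δ) := by
        apply exp_le_exp.mpr
        exact mul_le_mul_of_nonneg_right hc hΔ0
      rw [hfe]
      exact mul_le_mul h2 h1 hghpos.le (exp_pos _).le
    set Aε : Set ((ι → ℝ) × (ι → ℝ)) := A ∩ {ab | bet ab ≤ βmin - ε} with hAε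
    by_cases hne : Aε.Nonempty
    · have hAεcomp : IsCompact Aε :=
        hAcomp.inter_right (isClosed_le bet_cont continuous_const)
      obtain ⟨abε, habε, hminε⟩ := hAεcomp.exists_isMinOn hne (Fz_cont z hGs).continuousOn
      have hgt : gh G c A z < Fz G c z abε := by
        rcases lt_or_ge (gh G c A z) (Fz G c z abε) with h | h
        · exact h
        · exfalso
          have habεM : abε ∈ M := ⟨habε.1, h⟩
          have hub : βmin ≤ bet abε := hminM habεM
          have hlb : bet abε ≤ βmin - ε := habε.2
          linarith
      set ρ := Fz G c z abε / gh G c A z with hρ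
      have hρ1 : 1 < ρ := (one_lt_div hghpos).mpr hgt
      set K := max (βmin - ε - b) 1 with hK
      have hKpos : 0 < K := lt_of_lt_of_le one_pos (le_max_right _ _)
      refine ⟨Real.log ρ / K, div_pos (Real.log_pos hρ1) hKpos, ?_⟩
      rintro Δ ⟨hΔ0, hΔδ⟩
      have hball : ∀ ab ∈ A, exp ((βmin - ε) * Δ) * gh G c A z ≤ Fz G c (z - Δ) ab := by
        intro ab hab
        rcases le_or_gt (βmin - ε) (bet ab) with hc | hc
        · exact hball0 ab hab hc Δ hΔ0.le
        · have habε' : ab ∈ Aε := ⟨hab, hc.le⟩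
          have hfe : Fz G c (z - Δ) ab = exp (bet ab * Δ) * Fz G c z ab := by
            have := Fz_exp (c := c) hGhom (bet_pos hAb hab) (bet_eq hAb hab) z (z - Δ)
            rw [this]
            congr 1
            · congr 1; ring
          have h1 : Fz G c z abε ≤ Fz G c z ab := hminε habε'
          have h2 : exp (b * Δ) ≤ exp (bet ab * Δ) := by
            apply exp_le_exp.mpr
            exact mul_le_mul_of_nonneg_right (hbB ab hab).1 hΔ0.le
          have hkey : exp ((βmin - ε) * Δ) * gh G c A z ≤ exp (b * Δ) * Fz G c z abε := by
            have hFρ : Fz G c z abε = ρ * gh G c A z := by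
              rw [hρ]; field_simp
            rw [hFρ, show exp (b*Δ) * (ρ * gh G c A z) = (exp (b*Δ) * ρ) * gh G c A z
              from by ring]
            apply mul_le_mul_of_nonneg_right _ hghpos.le
            rw [show (βmin-ε)*Δ = b*Δ + (βmin - ε - b)*Δ from by ring, exp_add]
            apply mul_le_mul_of_nonneg_left _ (exp_pos _).le
            rw [← Real.exp_log (lt_trans one_pos hρ1)]
            apply exp_le_exp.mpr
            calc (βmin - ε - b) * Δ ≤ K * Δ :=
                  mul_le_mul_of_nonneg_right (le_max_left _ _) hΔ0.le
              _ ≤ K * (Real.log ρ / K) := mul_le_mul_of_nonneg_left hΔδ hKpos.le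
              _ = Real.log ρ := by field_simp
          calc exp ((βmin - ε) * Δ) * gh G c A z ≤ exp (b*Δ) * Fz G c z abε := hkey
            _ ≤ exp (bet ab * Δ) * Fz G c z abε :=
                mul_le_mul_of_nonneg_right h2 (Fz_pos hGs hGhom hGd1 z abε).le
            _ ≤ exp (bet ab * Δ) * Fz G c z ab :=
                mul_le_mul_of_nonneg_left h1 (exp_pos _).le
            _ = Fz G c (z - Δ) ab := hfe.symm
      obtain ⟨abΔ, habΔ, hminΔ⟩ := exists_min (c := c) hGs hAne hAcomp (z - Δ)
      rw [show gh G c A (z - Δ) = Fz G c (z - Δ) abΔ from ghat_eq habΔ hminΔ]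
      exact hball abΔ habΔ
    · refine ⟨1, one_pos, ?_⟩
      rintro Δ ⟨hΔ0, hΔδ⟩
      obtain ⟨abΔ, habΔ, hminΔ⟩ := exists_min (c := c) hGs hAne hAcomp (z - Δ)
      rw [show gh G c A (z - Δ) = Fz G c (z - Δ) abΔ from ghat_eq habΔ hminΔ]
      refine hball0 abΔ habΔ ?_ Δ hΔ0.le
      by_contra hcon
      exact hne ⟨abΔ, habΔ, le_of_not_ge hcon⟩

end family2

/-! ### Generic calculus helpers -/

lemma deriv_nonpos_right {φ : ℝ → ℝ} {d δ : ℝ} (hφ : HasDerivAt φ d 0) (hδ : 0 < δ)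
    (h : ∀ s ∈ Ioc (0:ℝ) δ, φ s ≤ φ 0) : d ≤ 0 := by
  have hw : HasDerivWithinAt φ d (Ioi 0) 0 := hφ.hasDerivWithinAt
  rw [hasDerivWithinAt_iff_tendsto_slope] at hw
  have hss : Ioi (0:ℝ) \ {0} = Ioi 0 := by
    ext x
    simp only [mem_diff, mem_singleton_iff, mem_Ioi]
    exact ⟨fun h => h.1, fun h => ⟨h, ne_of_gt h⟩⟩
  rw [hss] at hw
  refine le_of_tendsto hw ?_
  filter_upwards [Ioc_mem_nhdsGT_of_mem (Set.mem_Ico.mpr ⟨le_refl (0:ℝ), hδ⟩)] with s hs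
  rw [slope_def_field]
  have h1 : φ s ≤ φ 0 := h s hs
  have h2 : 0 < s := hs.1
  rw [div_nonpos_iff]
  right
  exact ⟨by simpa using sub_nonpos.mpr h1, by simpa using h2.le⟩

/-- derivative of the comparison function `s ↦ ((t+u s)(e^{k s} f0) + C)/(1+D+e^{k s} f0)`. -/
lemma psi_hasDeriv (t u k f0 C D : ℝ) (hden : ∀ s : ℝ, 1 + D + exp (k*s) * f0 ≠ 0) (s0 : ℝ) :
    HasDerivAt (fun s => ((t + u*s) * (exp (k*s) * f0) + C) / (1 + D + exp (k*s) * f0))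
      (((u * (exp (k*s0)*f0) + (t + u*s0) * (k * (exp (k*s0)*f0))) * (1 + D + exp (k*s0)*f0)
        - ((t + u*s0) * (exp (k*s0)*f0) + C) * (k * (exp (k*s0)*f0)))
        / (1 + D + exp (k*s0)*f0)^2) s0 := by
  have hexp : HasDerivAt (fun s : ℝ => exp (k*s)) (k * exp (k*s0)) s0 := by
    have h0 : HasDerivAt (fun s : ℝ => k*s) k s0 := by
      simpa using (hasDerivAt_id s0).const_mul k
    simpa [mul_comm] using h0.exp
  have hy : HasDerivAt (fun s : ℝ => exp (k*s) * f0) (k * (exp (k*s0) * f0)) s0 := by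
    simpa [mul_assoc] using hexp.mul_const f0
  have hlin : HasDerivAt (fun s : ℝ => t + u*s) u s0 := by
    simpa using ((hasDerivAt_id s0).const_mul u).const_add t
  have hnum : HasDerivAt (fun s => (t + u*s) * (exp (k*s) * f0) + C)
      (u * (exp (k*s0)*f0) + (t + u*s0) * (k * (exp (k*s0)*f0))) s0 :=
    (hlin.mul hy).add_const C
  have hd : HasDerivAt (fun s => 1 + D + exp (k*s) * f0) (k * (exp (k*s0)*f0)) s0 :=
    hy.const_add (1 + D)
  exact hnum.div hd (hden s0)

/-- Monotonicity of `y ↦ (t y + C)/(1+D+y)` when `t(1+D) - C ≥ 0`. -/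
lemma Phi_mono {t C D y1 y2 : ℝ} (hD : -1 < D) (hy1 : 0 < y1) (hy12 : y1 ≤ y2)
    (hP : 0 ≤ t * (1 + D) - C) :
    (t * y1 + C) / (1 + D + y1) ≤ (t * y2 + C) / (1 + D + y2) := by
  have h1 : 0 < 1 + D + y1 := by linarith
  have h2 : 0 < 1 + D + y2 := by linarith
  rw [div_le_div_iff₀ h1 h2]
  nlinarith [mul_nonneg (sub_nonneg.mpr hy12) hP]

/-- Antitonicity of `y ↦ (t y + C)/(1+D+y)` when `t(1+D) - C ≤ 0`. -/
lemma Phi_anti {t C D y1 y2 : ℝ} (hD : -1 < D) (hy1 : 0 < y1) (hy12 : y1 ≤ y2)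
    (hP : t * (1 + D) - C ≤ 0) :
    (t * y2 + C) / (1 + D + y2) ≤ (t * y1 + C) / (1 + D + y1) := by
  have h1 : 0 < 1 + D + y1 := by linarith
  have h2 : 0 < 1 + D + y2 := by linarith
  rw [div_le_div_iff₀ h2 h1]
  nlinarith [mul_nonneg (sub_nonneg.mpr hy12) (neg_nonneg.mpr hP)]

end Stmt9

/-! ### Abstract per-partition family structure -/

structure GFam (N : ℕ) where
  g : Fin N → ℝ → ℝ
  R : Fin N → ℝ → ℝ → Prop
  b : Fin N → ℝ
  B : Fin N → ℝ
  hb : ∀ n, 0 < b n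
  gpos : ∀ n z, 0 < g n z
  hRb : ∀ n z β, R n z β → b n ≤ β ∧ β ≤ B n
  hRmono : ∀ n z z' β β', z < z' → R n z β → R n z' β' → β ≤ β'
  hRint : ∀ n z β1 β2 β, R n z β1 → R n z β2 → β1 ≤ β → β ≤ β2 → R n z β
  hmaj : ∀ n z β, R n z β → ∀ z', g n z' ≤ Real.exp (-β * (z' - z)) * g n z
  hhi : ∀ n z, ∃ βmax, R n z βmax ∧ (∀ β, R n z β → β ≤ βmax) ∧
    ∀ ε > 0, ∃ δ > 0, ∀ Δ ∈ Set.Ioc (0:ℝ) δ,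
      Real.exp (-(βmax + ε) * Δ) * g n z ≤ g n (z + Δ)
  hlo : ∀ n z, ∃ βmin, R n z βmin ∧ (∀ β, R n z β → βmin ≤ β) ∧
    ∀ ε > 0, ∃ δ > 0, ∀ Δ ∈ Set.Ioc (0:ℝ) δ,
      Real.exp ((βmin - ε) * Δ) * g n z ≤ g n (z - Δ)

namespace GFam

open Real Set Filter Topology Stmt9

variable {N : ℕ} (F : GFam N)

/-- the reduced objective for an abstract family -/
noncomputable def W (z : Fin N → ℝ) : ℝ :=
  (∑ n, z n * F.g n (z n)) / (1 + ∑ l, F.g l (z l))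

lemma hRne (n : Fin N) (z : ℝ) : ∃ β, F.R n z β := by
  obtain ⟨β, hβ, -⟩ := F.hhi n z
  exact ⟨β, hβ⟩

lemma bB (n : Fin N) : F.b n ≤ F.B n := by
  obtain ⟨β, hβ⟩ := F.hRne n 0
  obtain ⟨h1, h2⟩ := F.hRb n 0 β hβ
  linarith

/-- decreasing: `z ≤ z'` implies `g z' ≤ e^{-b (z'-z)} g z`. -/
lemma sand_hi (n : Fin N) {z z' : ℝ} (h : z ≤ z') :
    F.g n z' ≤ exp (-(F.b n) * (z' - z)) * F.g n z := by
  obtain ⟨β, hβ⟩ := F.hRne n z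
  have h1 := F.hmaj n z β hβ z'
  have hb := (F.hRb n z β hβ).1
  have : exp (-β * (z' - z)) ≤ exp (-(F.b n) * (z' - z)) := by
    apply exp_le_exp.mpr
    nlinarith
  nlinarith [F.gpos n z, exp_pos (-β * (z' - z))]

lemma sand_lo (n : Fin N) {z z' : ℝ} (h : z ≤ z') :
    exp (-(F.B n) * (z' - z)) * F.g n z ≤ F.g n z' := by
  obtain ⟨β, hβ⟩ := F.hRne n z'
  have h1 := F.hmaj n z' β hβ z
  have hB := (F.hRb n z' β hβ).2
  -- g z ≤ e^{β (z' - z)} g z'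
  have h2 : F.g n z ≤ exp (β * (z' - z)) * F.g n z' := by
    have : -β * (z - z') = β * (z' - z) := by ring
    rwa [this] at h1
  have h3 : exp (-(F.B n) * (z' - z)) * F.g n z
      ≤ exp (-(F.B n) * (z' - z)) * (exp (β * (z' - z)) * F.g n z') :=
    mul_le_mul_of_nonneg_left h2 (exp_pos _).le
  have h4 : exp (-(F.B n) * (z' - z)) * exp (β * (z' - z)) ≤ 1 := by
    rw [← exp_add]
    rw [exp_le_one_iff]
    nlinarith
  calc exp (-(F.B n) * (z' - z)) * F.g n z
      ≤ exp (-(F.B n) * (z' - z)) * exp (β * (z' - z)) * F.g n z' := by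
        rw [mul_assoc]; exact h3
    _ ≤ 1 * F.g n z' := mul_le_mul_of_nonneg_right h4 (F.gpos n z').le
    _ = F.g n z' := one_mul _

lemma anti_g (n : Fin N) : StrictAnti (F.g n) := by
  intro z z' h
  have h1 := F.sand_hi n h.le
  have h2 : exp (-(F.b n) * (z' - z)) < 1 := by
    rw [exp_lt_one_iff]
    nlinarith [F.hb n]
  nlinarith [F.gpos n z]

lemma cont_g (n : Fin N) : Continuous (F.g n) := by
  rw [continuous_iff_continuousAt]
  intro z0
  set CC := F.B n with hCC
  have hC0 : 0 < CC := lt_of_lt_of_le (F.hb n) (F.bB n)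
  have hbnd : ∀ z, exp (-CC * |z - z0|) * F.g n z0 ≤ F.g n z
      ∧ F.g n z ≤ exp (CC * |z - z0|) * F.g n z0 := by
    intro z
    rcases le_total z0 z with h | h
    · have habs : |z - z0| = z - z0 := abs_of_nonneg (by linarith)
      constructor
      · rw [habs]
        exact F.sand_lo n h
      · rw [habs]
        have h1 := F.sand_hi n h
        have h2 : exp (-(F.b n) * (z - z0)) ≤ exp (CC * (z - z0)) := by
          apply exp_le_exp.mpr
          have hb := F.hb n
          nlinarith
        nlinarith [F.gpos n z0]
    · have habs : |z - z0| = z0 - z := by rw [abs_sub_comm]; exact abs_of_nonneg (by linarith)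
      constructor
      · rw [habs]
        have h1 := F.sand_hi n h
        -- g z0 ≤ e^{-b (z0 - z)} g z, so g z ≥ e^{b(z0-z)} g z0 ≥ e^{-C(z0-z)} g z0
        have h2 : exp (-CC * (z0 - z)) ≤ exp ((F.b n) * (z0 - z)) := by
          apply exp_le_exp.mpr
          have hb := F.hb n
          nlinarith
        have h3 : exp ((F.b n) * (z0 - z)) * F.g n z0 ≤ F.g n z := by
          have hh : exp ((F.b n) * (z0 - z)) * exp (-(F.b n) * (z0 - z)) = 1 := by
            rw [← exp_add]; simp
          calc exp ((F.b n) * (z0 - z)) * F.g n z0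
              ≤ exp ((F.b n) * (z0 - z)) * (exp (-(F.b n) * (z0 - z)) * F.g n z) :=
                mul_le_mul_of_nonneg_left h1 (exp_pos _).le
            _ = (exp ((F.b n) * (z0 - z)) * exp (-(F.b n) * (z0 - z))) * F.g n z := by ring
            _ = F.g n z := by rw [hh, one_mul]
        calc exp (-CC * (z0 - z)) * F.g n z0 ≤ exp ((F.b n) * (z0 - z)) * F.g n z0 :=
              mul_le_mul_of_nonneg_right h2 (F.gpos n z0).le
          _ ≤ F.g n z := h3
      · rw [habs]
        have h1 := F.sand_lo n h
        -- e^{-B(z0 - z)} g z ≤ g z0, so g z ≤ e^{B(z0-z)} g z0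
        have hh : exp (CC * (z0 - z)) * exp (-CC * (z0 - z)) = 1 := by
          rw [← exp_add]; simp
        calc F.g n z = (exp (CC * (z0 - z)) * exp (-CC * (z0 - z))) * F.g n z := by
              rw [hh, one_mul]
          _ = exp (CC * (z0 - z)) * (exp (-CC * (z0 - z)) * F.g n z) := by ring
          _ ≤ exp (CC * (z0 - z)) * F.g n z0 := mul_le_mul_of_nonneg_left h1 (exp_pos _).le
  have hlo2 : Tendsto (fun z => exp (-CC * |z - z0|) * F.g n z0) (𝓝 z0) (𝓝 (F.g n z0)) := by
    have hc : Continuous (fun z => exp (-CC * |z - z0|) * F.g n z0) := by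
      continuity
    have := hc.continuousAt (x := z0)
    simpa [ContinuousAt] using this
  have hhi2 : Tendsto (fun z => exp (CC * |z - z0|) * F.g n z0) (𝓝 z0) (𝓝 (F.g n z0)) := by
    have hc : Continuous (fun z => exp (CC * |z - z0|) * F.g n z0) := by
      continuity
    have := hc.continuousAt (x := z0)
    simpa [ContinuousAt] using this
  exact tendsto_of_tendsto_of_tendsto_of_le_of_le hlo2 hhi2
    (fun z => (hbnd z).1) (fun z => (hbnd z).2)

open Stmt9 in
/-- core one-sided comparison: if the explicit exponential comparison function is
below its value at `0` on a right neighbourhood then its derivative there is `≤ 0`. -/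
lemma comp_ineq {t0 u k f0 C D δ' : ℝ} (hf0 : 0 < f0) (hD : 0 ≤ D) (hδ' : 0 < δ')
    (h : ∀ s ∈ Ioc (0:ℝ) δ', ((t0 + u*s) * (exp (k*s) * f0) + C) / (1 + D + exp (k*s) * f0)
      ≤ (t0 * f0 + C) / (1 + D + f0)) :
    (u + t0*k) * (1 + D + f0) ≤ (t0*f0 + C) * k := by
  have hden : ∀ s : ℝ, 1 + D + exp (k*s) * f0 ≠ 0 := by
    intro s
    have := exp_pos (k*s)
    have : 0 < exp (k*s) * f0 := mul_pos this hf0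
    positivity
  have hψd := psi_hasDeriv t0 u k f0 C D hden 0
  simp only [mul_zero, exp_zero, one_mul, add_zero] at hψd
  have hle : ∀ s ∈ Ioc (0:ℝ) δ',
      (fun s => ((t0 + u*s) * (exp (k*s) * f0) + C) / (1 + D + exp (k*s) * f0)) s
      ≤ (fun s => ((t0 + u*s) * (exp (k*s) * f0) + C) / (1 + D + exp (k*s) * f0)) 0 := by
    intro s hs
    have h0 : (fun s => ((t0 + u*s) * (exp (k*s) * f0) + C) / (1 + D + exp (k*s) * f0)) 0
        = (t0 * f0 + C) / (1 + D + f0) := by norm_num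
    rw [h0]
    exact h s hs
  have hd := deriv_nonpos_right hψd hδ' hle
  have hQpos : (0:ℝ) < 1 + D + f0 := by linarith
  have hQ2 : (0:ℝ) < (1 + D + f0)^2 := by positivity
  have hnum : (u * f0 + t0 * (k * f0)) * (1 + D + f0) - (t0 * f0 + C) * (k * f0) ≤ 0 := by
    rcases div_nonpos_iff.mp hd with ⟨h1, h2⟩ | ⟨h1, h2⟩
    · nlinarith
    · exact h1
  have heq : (u * f0 + t0 * (k * f0)) * (1 + D + f0) - (t0 * f0 + C) * (k * f0)
      = f0 * ((u + t0*k) * (1 + D + f0) - (t0*f0 + C)*k) := by ring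
  rw [heq] at hnum
  nlinarith

lemma Q_pos (z : Fin N → ℝ) : 0 < 1 + ∑ l, F.g l (z l) := by
  have : 0 ≤ ∑ l, F.g l (z l) := Finset.sum_nonneg fun l _ => (F.gpos l (z l)).le
  linarith

lemma W_update (z : Fin N → ℝ) (n : Fin N) (t : ℝ) :
    F.W (Function.update z n t)
      = (t * F.g n t + ∑ l ∈ Finset.univ.erase n, z l * F.g l (z l))
        / (1 + (∑ l ∈ Finset.univ.erase n, F.g l (z l)) + F.g n t) := by
  classical
  have hnum : ∑ l, (Function.update z n t l) * F.g l (Function.update z n t l)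
      = t * F.g n t + ∑ l ∈ Finset.univ.erase n, z l * F.g l (z l) := by
    rw [← Finset.add_sum_erase Finset.univ _ (Finset.mem_univ n)]
    congr 1
    · rw [Function.update_self]
    · refine Finset.sum_congr rfl fun l hl => ?_
      rw [Function.update_of_ne (Finset.ne_of_mem_erase hl)]
  have hden : ∑ l, F.g l (Function.update z n t l)
      = (∑ l ∈ Finset.univ.erase n, F.g l (z l)) + F.g n t := by
    rw [← Finset.add_sum_erase Finset.univ _ (Finset.mem_univ n)]
    rw [Function.update_self]
    rw [add_comm]
    congr 1
    refine Finset.sum_congr rfl fun l hl => ?_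
    rw [Function.update_of_ne (Finset.ne_of_mem_erase hl)]
  rw [W, hnum, hden]
  ring_nf

/-- The first-order condition satisfied at every local maximum. -/
theorem foc {z : Fin N → ℝ} (hz : IsLocalMax F.W z) (n : Fin N) :
    ∃ β, F.R n (z n) β ∧
      1 + ∑ l, F.g l (z l)
        = β * (z n * (1 + ∑ l, F.g l (z l)) - ∑ l, z l * F.g l (z l)) := by
  classical
  set C := ∑ l ∈ Finset.univ.erase n, z l * F.g l (z l) with hCdef
  set D := ∑ l ∈ Finset.univ.erase n, F.g l (z l) with hDdef
  have hD0 : 0 ≤ D := Finset.sum_nonneg fun l _ => (F.gpos l (z l)).le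
  set t0 := z n with ht0
  set f0 := F.g n t0 with hf0def
  have hf0pos : 0 < f0 := F.gpos n t0
  set Q := 1 + D + f0 with hQdef
  have hQpos : 0 < Q := by rw [hQdef]; linarith
  set P := t0 * (1 + D) - C with hPdef
  have hQ_eq : 1 + ∑ l, F.g l (z l) = Q := by
    rw [hQdef, hDdef, hf0def, ht0,
      ← Finset.add_sum_erase Finset.univ (fun l => F.g l (z l)) (Finset.mem_univ n)]
    ring
  have hR_eq : ∑ l, z l * F.g l (z l) = t0 * f0 + C := by
    rw [hCdef, hf0def, ht0,
      ← Finset.add_sum_erase Finset.univ (fun l => z l * F.g l (z l)) (Finset.mem_univ n)]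
  have hPQ : z n * (1 + ∑ l, F.g l (z l)) - ∑ l, z l * F.g l (z l) = P := by
    rw [hQ_eq, hR_eq, hPdef, hQdef, ht0]
    ring
  -- the one-dimensional slice and its local maximality
  set φ : ℝ → ℝ := fun t => (t * F.g n t + C) / (1 + D + F.g n t) with hφdef
  have hφ_eq : ∀ t, F.W (Function.update z n t) = φ t := fun t => F.W_update z n t
  have hφ0 : φ t0 = (t0 * f0 + C) / Q := by rw [hφdef, hQdef, hf0def]
  have hloc : ∀ᶠ t in 𝓝 t0, φ t ≤ φ t0 := by
    have hcont : Continuous (fun t : ℝ => Function.update z n t) :=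
      continuous_const.update n continuous_id
    have hten : Tendsto (fun t : ℝ => Function.update z n t) (𝓝 t0) (𝓝 z) := by
      have := hcont.continuousAt (x := t0)
      rwa [ContinuousAt, Function.update_eq_self] at this
    have hev := hten.eventually hz
    have hWz : F.W z = φ t0 := by
      rw [← Function.update_eq_self n z, hφ_eq]
    filter_upwards [hev] with t ht
    rw [← hφ_eq t, ← hWz]
    exact ht
  obtain ⟨δ₂, hδ₂pos, hloc'⟩ := Metric.eventually_nhds_iff.mp hloc
  obtain ⟨βmax, hβmaxR, hβmaxUB, hβmaxε⟩ := F.hhi n t0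
  obtain ⟨βmin, hβminR, hβminLB, hβminε⟩ := F.hlo n t0
  have hβminpos : 0 < βmin := lt_of_lt_of_le (F.hb n) (F.hRb n t0 βmin hβminR).1
  have hβmaxpos : 0 < βmax := lt_of_lt_of_le hβminpos (hβminLB βmax hβmaxR)
  -- RIGHT estimate
  have hright : 0 ≤ P → ∀ ε > 0, Q ≤ (βmax + ε) * P := by
    intro hP0 ε hε
    obtain ⟨δ, hδpos, hδ⟩ := hβmaxε ε hε
    set k := -(βmax + ε) with hkdef
    set δ' := min δ (δ₂/2) with hδ'def
    have hδ'pos : 0 < δ' := lt_min hδpos (by linarith)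
    have hcomp : ∀ s ∈ Ioc (0:ℝ) δ',
        ((t0 + 1*s) * (exp (k*s) * f0) + C) / (1 + D + exp (k*s) * f0)
          ≤ (t0 * f0 + C) / (1 + D + f0) := by
      intro s hs
      have hs0 : 0 < s := hs.1
      have hglow : exp (k*s) * f0 ≤ F.g n (t0 + s) := by
        have := hδ s ⟨hs0, le_trans hs.2 (min_le_left _ _)⟩
        rw [hkdef, hf0def]
        exact this
      have hexp_pos : (0:ℝ) < exp (k*s) * f0 := mul_pos (exp_pos _) hf0pos
      have hsign : 0 ≤ (t0 + s) * (1 + D) - C := by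
        have : (t0 + s) * (1 + D) - C = P + s * (1 + D) := by rw [hPdef]; ring
        rw [this]
        nlinarith
      have h1 := Phi_mono (t := t0 + s) (C := C) (D := D)
        (by linarith : (-1:ℝ) < D) hexp_pos hglow hsign
      have h2 : φ (t0 + s) ≤ φ t0 := by
        apply hloc'
        simp only [Real.dist_eq, add_sub_cancel_left]
        rw [abs_of_pos hs0]
        have := le_trans hs.2 (min_le_right δ (δ₂/2))
        linarith
      rw [hφ0] at h2
      rw [hφdef] at h2
      calc ((t0 + 1*s) * (exp (k*s) * f0) + C) / (1 + D + exp (k*s) * f0)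
          = ((t0+s) * (exp (k*s)*f0) + C) / (1 + D + exp (k*s)*f0) := by rw [one_mul]
        _ ≤ ((t0+s) * F.g n (t0+s) + C) / (1 + D + F.g n (t0+s)) := h1
        _ ≤ (t0 * f0 + C) / Q := h2
        _ = (t0 * f0 + C) / (1 + D + f0) := by rw [hQdef]
    have hineq := comp_ineq hf0pos hD0 hδ'pos hcomp
    -- (1 + t0*k)(1+D+f0) ≤ (t0 f0 + C) k   with k = -(βmax+ε)
    rw [hkdef] at hineq
    have : Q - (βmax + ε) * P = (1 + t0 * (-(βmax+ε))) * (1 + D + f0)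
        - (t0*f0 + C) * (-(βmax+ε)) := by
      rw [hQdef, hPdef]; ring
    linarith [hineq, this.ge, this.le]
  -- P < 0 is impossible
  have hPnn : 0 ≤ P := by
    by_contra hPneg
    push_neg at hPneg
    set k := -βmax with hkdef
    set δ₃ := min (δ₂/2) (-P/(2*(1+D))) with hδ₃def
    have hδ₃pos : 0 < δ₃ := by
      apply lt_min (by linarith)
      apply div_pos (by linarith) (by linarith)
    have hcomp : ∀ s ∈ Ioc (0:ℝ) δ₃,
        ((t0 + 1*s) * (exp (k*s) * f0) + C) / (1 + D + exp (k*s) * f0)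
          ≤ (t0 * f0 + C) / (1 + D + f0) := by
      intro s hs
      have hs0 : 0 < s := hs.1
      have hsb : s ≤ -P/(2*(1+D)) := le_trans hs.2 (min_le_right _ _)
      have hgup : F.g n (t0 + s) ≤ exp (k*s) * f0 := by
        have := F.hmaj n t0 βmax hβmaxR (t0 + s)
        rw [show t0 + s - t0 = s from by ring] at this
        rw [hkdef, hf0def]
        exact this
      have hsign : (t0 + s) * (1 + D) - C ≤ 0 := by
        have he : (t0 + s) * (1 + D) - C = P + s * (1 + D) := by rw [hPdef]; ring
        rw [he]
        have : s * (1 + D) ≤ -P/2 := by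
          have h2 := mul_le_mul_of_nonneg_right hsb (by linarith : (0:ℝ) ≤ 1 + D)
          calc s * (1+D) ≤ (-P/(2*(1+D))) * (1+D) := h2
            _ = -P/2 := by field_simp
        linarith
      have h1 := Phi_anti (t := t0 + s) (C := C) (D := D)
        (by linarith : (-1:ℝ) < D) (F.gpos n (t0+s)) hgup hsign
      have h2 : φ (t0 + s) ≤ φ t0 := by
        apply hloc'
        simp only [Real.dist_eq, add_sub_cancel_left]
        rw [abs_of_pos hs0]
        have := le_trans hs.2 (min_le_left (δ₂/2) _)
        linarith
      rw [hφ0] at h2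
      rw [hφdef] at h2
      calc ((t0 + 1*s) * (exp (k*s) * f0) + C) / (1 + D + exp (k*s) * f0)
          = ((t0+s) * (exp (k*s)*f0) + C) / (1 + D + exp (k*s)*f0) := by rw [one_mul]
        _ ≤ ((t0+s) * F.g n (t0+s) + C) / (1 + D + F.g n (t0+s)) := h1
        _ ≤ (t0 * f0 + C) / Q := h2
        _ = (t0 * f0 + C) / (1 + D + f0) := by rw [hQdef]
    have hineq := comp_ineq hf0pos hD0 hδ₃pos hcomp
    rw [hkdef] at hineq
    -- gives Q ≤ βmax * P < 0, contradiction
    have hQP : Q ≤ βmax * P := by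
      have : Q - βmax * P = (1 + t0 * (-βmax)) * (1 + D + f0) - (t0*f0 + C) * (-βmax) := by
        rw [hQdef, hPdef]; ring
      linarith [hineq, this.le, this.ge]
    nlinarith
  have hPpos : 0 < P := by
    rcases lt_or_eq_of_le hPnn with h | h
    · exact h
    · exfalso
      have := hright hPnn 1 one_pos
      rw [← h] at this
      nlinarith
  -- limit ε → 0 on the right
  have hQle : Q ≤ βmax * P := by
    apply le_of_forall_pos_le_add
    intro ε' hε'
    have := hright hPnn (ε'/P) (div_pos hε' hPpos)
    calc Q ≤ (βmax + ε'/P) * P := this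
      _ = βmax * P + ε' := by field_simp
  -- LEFT estimate
  have hleft : ∀ ε > 0, (βmin - ε) * P ≤ Q := by
    intro ε hε
    obtain ⟨δ, hδpos, hδ⟩ := hβminε ε hε
    set k := βmin - ε with hkdef
    set δ₄ := min δ (min (δ₂/2) (P/(2*(1+D)))) with hδ₄def
    have hδ₄pos : 0 < δ₄ :=
      lt_min hδpos (lt_min (by linarith) (div_pos hPpos (by linarith)))
    have hcomp : ∀ s ∈ Ioc (0:ℝ) δ₄,
        ((t0 + (-1)*s) * (exp (k*s) * f0) + C) / (1 + D + exp (k*s) * f0)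
          ≤ (t0 * f0 + C) / (1 + D + f0) := by
      intro s hs
      have hs0 : 0 < s := hs.1
      have hsδ : s ≤ δ := le_trans hs.2 (min_le_left _ _)
      have hsδ₂ : s ≤ δ₂/2 := le_trans hs.2 (le_trans (min_le_right _ _) (min_le_left _ _))
      have hsP : s ≤ P/(2*(1+D)) :=
        le_trans hs.2 (le_trans (min_le_right _ _) (min_le_right _ _))
      have hglow : exp (k*s) * f0 ≤ F.g n (t0 - s) := by
        have := hδ s ⟨hs0, hsδ⟩
        rw [hkdef, hf0def]
        exact this
      have hexp_pos : (0:ℝ) < exp (k*s) * f0 := mul_pos (exp_pos _) hf0pos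
      have hsign : 0 ≤ (t0 - s) * (1 + D) - C := by
        have he : (t0 - s) * (1 + D) - C = P - s * (1 + D) := by rw [hPdef]; ring
        rw [he]
        have : s * (1 + D) ≤ P/2 := by
          have h2 := mul_le_mul_of_nonneg_right hsP (by linarith : (0:ℝ) ≤ 1 + D)
          calc s * (1+D) ≤ (P/(2*(1+D))) * (1+D) := h2
            _ = P/2 := by field_simp
        linarith
      have h1 := Phi_mono (t := t0 - s) (C := C) (D := D)
        (by linarith : (-1:ℝ) < D) hexp_pos hglow hsign
      have h2 : φ (t0 - s) ≤ φ t0 := by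
        apply hloc'
        have habs : dist (t0 - s) t0 = s := by
          rw [Real.dist_eq]
          rw [show t0 - s - t0 = -s from by ring, abs_neg, abs_of_pos hs0]
        rw [habs]
        linarith
      rw [hφ0] at h2
      rw [hφdef] at h2
      calc ((t0 + (-1)*s) * (exp (k*s) * f0) + C) / (1 + D + exp (k*s) * f0)
          = ((t0-s) * (exp (k*s)*f0) + C) / (1 + D + exp (k*s)*f0) := by ring_nf
        _ ≤ ((t0-s) * F.g n (t0-s) + C) / (1 + D + F.g n (t0-s)) := h1
        _ ≤ (t0 * f0 + C) / Q := h2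
        _ = (t0 * f0 + C) / (1 + D + f0) := by rw [hQdef]
    have hineq := comp_ineq hf0pos hD0 hδ₄pos hcomp
    rw [hkdef] at hineq
    have : (βmin - ε) * P - Q = ((-1) + t0 * (βmin - ε)) * (1 + D + f0)
        - (t0*f0 + C) * (βmin - ε) := by
      rw [hQdef, hPdef]; ring
    rw [hkdef]
    linarith [hineq, this.le, this.ge]
  have hQge : βmin * P ≤ Q := by
    have hkey : ∀ ε' > (0:ℝ), βmin * P ≤ Q + ε' := by
      intro ε' hε'
      have := hleft (ε'/P) (div_pos hε' hPpos)
      have he : (βmin - ε'/P) * P = βmin * P - ε' := by field_simp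
      rw [he] at this
      linarith
    exact le_of_forall_pos_le_add hkey
  -- conclude with the intermediate β
  refine ⟨Q / P, ?_, ?_⟩
  · refine F.hRint n t0 βmin βmax (Q/P) hβminR hβmaxR ?_ ?_
    · rw [le_div_iff₀ hPpos]; linarith
    · rw [div_le_iff₀ hPpos]; linarith
  · rw [hQ_eq]
    have hPQ' : t0 * Q - ∑ l, z l * F.g l (z l) = P := by
      rw [← hQ_eq]; exact hPQ
    rw [hPQ']
    field_simp

/-- Package the FOC into the fixed-point system. -/
theorem foc_sys {z : Fin N → ℝ} (hz : IsLocalMax F.W z) :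
    ∃ βv : Fin N → ℝ, (∀ n, F.R n (z n) (βv n)) ∧
      ∀ n, z n = (∑ l, F.g l (z l) / βv l) + 1 / βv n := by
  classical
  choose βv hR hEq using fun n => F.foc hz n
  refine ⟨βv, hR, ?_⟩
  set Q := 1 + ∑ l, F.g l (z l) with hQdef
  set Rn := ∑ l, z l * F.g l (z l) with hRdef
  have hQpos : 0 < Q := F.Q_pos z
  have hβpos : ∀ n, 0 < βv n := fun n =>
    lt_of_lt_of_le (F.hb n) (F.hRb n (z n) (βv n) (hR n)).1
  have hstep1 : ∀ n, z n = Rn / Q + 1 / βv n := by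
    intro n
    have h := hEq n
    have hβn := hβpos n
    field_simp at h ⊢
    nlinarith [h]
  have hsum : Rn = (Rn / Q) * (Q - 1) + ∑ l, F.g l (z l) / βv l := by
    have h1 : Rn = ∑ l, (Rn / Q + 1 / βv l) * F.g l (z l) := by
      rw [hRdef]
      exact Finset.sum_congr rfl fun l _ => by rw [← hstep1 l]
    have h2 : ∑ l, (Rn / Q + 1 / βv l) * F.g l (z l)
        = (Rn / Q) * (∑ l, F.g l (z l)) + ∑ l, F.g l (z l) / βv l := by
      rw [Finset.mul_sum, ← Finset.sum_add_distrib]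
      exact Finset.sum_congr rfl fun l _ => by ring
    have h3 : (∑ l, F.g l (z l)) = Q - 1 := by rw [hQdef]; ring
    have h4 : Rn = (Rn / Q) * (Q - 1) + ∑ l, F.g l (z l) / βv l := by
      conv_lhs => rw [h1]
      rw [h2, h3]
    exact h4
  have hS : (∑ l, F.g l (z l) / βv l) = Rn / Q := by
    have hid : Rn - (Rn / Q) * (Q - 1) = Rn / Q := by
      field_simp
      ring
    linarith [hsum, hid]
  intro n
  rw [hS]
  exact hstep1 n

/-- Any two solutions of the fixed-point system coincide. -/
theorem sys_le {z z' : Fin N → ℝ} {βv βv' : Fin N → ℝ}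
    (hR : ∀ n, F.R n (z n) (βv n)) (hR' : ∀ n, F.R n (z' n) (βv' n))
    (hEq : ∀ n, z n = (∑ l, F.g l (z l) / βv l) + 1 / βv n)
    (hEq' : ∀ n, z' n = (∑ l, F.g l (z' l) / βv' l) + 1 / βv' n)
    (hθ : (∑ l, F.g l (z l) / βv l) ≤ ∑ l, F.g l (z' l) / βv' l) :
    ∀ n, z n ≤ z' n := by
  intro n
  by_contra hcon
  push_neg at hcon
  have hββ : βv' n ≤ βv n := F.hRmono n (z' n) (z n) _ _ hcon (hR' n) (hR n)
  have hβ'pos : 0 < βv' n := lt_of_lt_of_le (F.hb n) (F.hRb n _ _ (hR' n)).1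
  have hinv : 1 / βv n ≤ 1 / βv' n := one_div_le_one_div_of_le hβ'pos hββ
  linarith [hEq n, hEq' n]

theorem sys_eq_of_le {z z' : Fin N → ℝ} {βv βv' : Fin N → ℝ}
    (hR : ∀ n, F.R n (z n) (βv n)) (hR' : ∀ n, F.R n (z' n) (βv' n))
    (hEq : ∀ n, z n = (∑ l, F.g l (z l) / βv l) + 1 / βv n)
    (hEq' : ∀ n, z' n = (∑ l, F.g l (z' l) / βv' l) + 1 / βv' n)
    (hθ : (∑ l, F.g l (z l) / βv l) ≤ ∑ l, F.g l (z' l) / βv' l) :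
    z = z' := by
  have hle := F.sys_le hR hR' hEq hEq' hθ
  by_contra hne
  have hex : ∃ n, z n < z' n := by
    by_contra hno
    push_neg at hno
    exact hne (funext fun n => le_antisymm (hle n) (hno n))
  obtain ⟨n, hn⟩ := hex
  have hterm : ∀ l, F.g l (z' l) / βv' l ≤ F.g l (z l) / βv l := by
    intro l
    have hβpos : 0 < βv l := lt_of_lt_of_le (F.hb l) (F.hRb l _ _ (hR l)).1
    have hβ'pos : 0 < βv' l := lt_of_lt_of_le (F.hb l) (F.hRb l _ _ (hR' l)).1
    rcases eq_or_lt_of_le (hle l) with heq | hlt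
    · -- z l = z' l : compare the 1/β's through the system
      have h1 : 1 / βv' l ≤ 1 / βv l := by
        have e1 := hEq l
        have e2 := hEq' l
        rw [← heq] at e2
        linarith
      rw [← heq]
      calc F.g l (z l) / βv' l = F.g l (z l) * (1 / βv' l) := by ring
        _ ≤ F.g l (z l) * (1 / βv l) := by
            apply mul_le_mul_of_nonneg_left h1 (F.gpos l (z l)).le
        _ = F.g l (z l) / βv l := by ring
    · have hg : F.g l (z' l) ≤ F.g l (z l) := (F.anti_g l hlt).le
      have hββ : βv l ≤ βv' l := F.hRmono l (z l) (z' l) _ _ hlt (hR l) (hR' l)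
      have h1 : 1 / βv' l ≤ 1 / βv l := one_div_le_one_div_of_le hβpos hββ
      calc F.g l (z' l) / βv' l = F.g l (z' l) * (1 / βv' l) := by ring
        _ ≤ F.g l (z l) * (1 / βv l) := by
            apply mul_le_mul hg h1 (by positivity) (F.gpos l (z l)).le
        _ = F.g l (z l) / βv l := by ring
  have hstrict : F.g n (z' n) / βv' n < F.g n (z n) / βv n := by
    have hβpos : 0 < βv n := lt_of_lt_of_le (F.hb n) (F.hRb n _ _ (hR n)).1
    have hβ'pos : 0 < βv' n := lt_of_lt_of_le (F.hb n) (F.hRb n _ _ (hR' n)).1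
    have hg : F.g n (z' n) < F.g n (z n) := F.anti_g n hn
    have hββ : βv n ≤ βv' n := F.hRmono n (z n) (z' n) _ _ hn (hR n) (hR' n)
    have h1 : 1 / βv' n ≤ 1 / βv n := one_div_le_one_div_of_le hβpos hββ
    calc F.g n (z' n) / βv' n = F.g n (z' n) * (1 / βv' n) := by ring
      _ < F.g n (z n) * (1 / βv n) := by
          apply mul_lt_mul hg h1 (by positivity) (F.gpos n (z n)).le
      _ = F.g n (z n) / βv n := by ring
  have hsum : (∑ l, F.g l (z' l) / βv' l) < ∑ l, F.g l (z l) / βv l :=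
    Finset.sum_lt_sum (fun l _ => hterm l) ⟨n, Finset.mem_univ n, hstrict⟩
  linarith

theorem sys_eq {z z' : Fin N → ℝ} {βv βv' : Fin N → ℝ}
    (hR : ∀ n, F.R n (z n) (βv n)) (hR' : ∀ n, F.R n (z' n) (βv' n))
    (hEq : ∀ n, z n = (∑ l, F.g l (z l) / βv l) + 1 / βv n)
    (hEq' : ∀ n, z' n = (∑ l, F.g l (z' l) / βv' l) + 1 / βv' n) :
    z = z' := by
  rcases le_total (∑ l, F.g l (z l) / βv l) (∑ l, F.g l (z' l) / βv' l) with h | h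
  · exact F.sys_eq_of_le hR hR' hEq hEq' h
  · exact (F.sys_eq_of_le hR' hR hEq' hEq h).symm

open Stmt9 in
lemma psi_strictAnti {t1 k f0 C D Qb : ℝ} (hf0 : 0 < f0) (hD : 0 ≤ D) (hk : 0 < k)
    (hQb : 1 + D + f0 ≤ Qb)
    (hgap : ∀ s ≥ (0:ℝ), Qb + 1 ≤ k * ((t1 + s) * (1 + D) - C)) :
    StrictAntiOn (fun s => ((t1 + 1*s) * (exp ((-k)*s) * f0) + C) / (1 + D + exp ((-k)*s) * f0))
      (Ici 0) := by
  have hden : ∀ s : ℝ, 1 + D + exp ((-k)*s) * f0 ≠ 0 := by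
    intro s
    have h1 : 0 < exp ((-k)*s) * f0 := mul_pos (exp_pos _) hf0
    positivity
  apply strictAntiOn_of_deriv_neg (convex_Ici 0)
  · apply Continuous.continuousOn
    apply Continuous.div
    · continuity
    · continuity
    · exact hden
  · intro s0 hs0
    rw [interior_Ici] at hs0
    have hds := psi_hasDeriv t1 1 (-k) f0 C D hden s0
    rw [hds.deriv]
    have hypos : 0 < exp ((-k)*s0) * f0 := mul_pos (exp_pos _) hf0
    have hyle : exp ((-k)*s0) * f0 ≤ f0 := by
      have h1 : exp ((-k)*s0) ≤ 1 := by
        rw [exp_le_one_iff]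
        nlinarith [le_of_lt (mem_Ioi.mp hs0)]
      nlinarith
    have hDen : 0 < 1 + D + exp ((-k)*s0) * f0 := by linarith
    apply div_neg_of_neg_of_pos
    · have heq : (1 * (exp ((-k)*s0)*f0) + (t1 + 1*s0) * ((-k) * (exp ((-k)*s0)*f0)))
            * (1 + D + exp ((-k)*s0)*f0)
          - ((t1 + 1*s0) * (exp ((-k)*s0)*f0) + C) * ((-k) * (exp ((-k)*s0)*f0))
          = (exp ((-k)*s0)*f0) * ((1 + D + exp ((-k)*s0)*f0)
              - k * ((t1 + s0) * (1 + D) - C)) := by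
        ring
      rw [heq]
      apply mul_neg_of_pos_of_neg hypos
      have hg := hgap s0 (le_of_lt (mem_Ioi.mp hs0))
      linarith
    · exact pow_pos hDen 2

/-- Existence of a global maximiser of `W`. -/
theorem exists_max (hN : 1 ≤ N) : ∃ zs : Fin N → ℝ, ∀ z, F.W z ≤ F.W zs := by
  classical
  haveI : Nonempty (Fin N) := ⟨⟨0, hN⟩⟩
  -- constants
  set gmin := Finset.univ.inf' Finset.univ_nonempty (fun n => F.g n 0) with hgmin
  have hgmin_pos : 0 < gmin := by
    rw [hgmin, Finset.lt_inf'_iff]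
    exact fun n _ => F.gpos n 0
  have hgmin_le : ∀ n, gmin ≤ F.g n 0 := fun n =>
    Finset.inf'_le _ (Finset.mem_univ n)
  set Mc := ∑ l, F.g l 0 / F.b l with hMc
  have hMl : ∀ l (t : ℝ), t * F.g l t ≤ F.g l 0 / F.b l := by
    intro l t
    have hbl := F.hb l
    have hMpos : 0 < F.g l 0 / F.b l := div_pos (F.gpos l 0) hbl
    rcases le_or_gt t 0 with h | h
    · have h1 : t * F.g l t ≤ 0 := mul_nonpos_of_nonpos_of_nonneg h (F.gpos l t).le
      linarith
    · have h1 : F.g l t ≤ exp (-(F.b l) * t) * F.g l 0 := by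
        have := F.sand_hi l (le_of_lt h : (0:ℝ) ≤ t)
        simpa using this
      have h2 : t * F.g l t ≤ t * (exp (-(F.b l)*t) * F.g l 0) :=
        mul_le_mul_of_nonneg_left h1 h.le
      have h3 : F.b l * t ≤ exp (F.b l * t) := by
        have := Real.add_one_le_exp (F.b l * t)
        linarith
      have hexp := exp_pos (F.b l * t)
      have h4 : t * exp (-(F.b l)*t) ≤ 1 / F.b l := by
        rw [show -(F.b l)*t = -(F.b l * t) from by ring, exp_neg, ← div_eq_mul_inv,
          div_le_div_iff₀ hexp hbl]
        nlinarith
      calc t * F.g l t ≤ t * (exp (-(F.b l)*t) * F.g l 0) := h2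
        _ = (t * exp (-(F.b l)*t)) * F.g l 0 := by ring
        _ ≤ (1/F.b l) * F.g l 0 := mul_le_mul_of_nonneg_right h4 (F.gpos l 0).le
        _ = F.g l 0 / F.b l := by ring
  have hMc_nonneg : 0 ≤ Mc :=
    Finset.sum_nonneg fun l _ => (div_pos (F.gpos l 0) (F.hb l)).le
  set T := max 1 ((Mc + 1)/gmin) with hT
  have hT1 : (1:ℝ) ≤ T := le_max_left _ _
  have hTprop : ∀ n, Mc + 1 ≤ T * F.g n 0 := by
    intro n
    have h1 : (Mc + 1)/gmin ≤ T := le_max_right _ _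
    have h2 : (Mc + 1)/gmin * gmin ≤ T * gmin :=
      mul_le_mul_of_nonneg_right h1 hgmin_pos.le
    rw [div_mul_cancel₀ _ (ne_of_gt hgmin_pos)] at h2
    calc Mc + 1 ≤ T * gmin := h2
      _ ≤ T * F.g n 0 := mul_le_mul_of_nonneg_left (hgmin_le n) (by linarith)
  -- W is negative if some coordinate is < -T
  have hneg : ∀ z : Fin N → ℝ, ∀ n, z n < -T → F.W z < 0 := by
    intro z n hzn
    have hnum : ∑ l, z l * F.g l (z l) ≤ -1 := by
      have hrest : ∑ l ∈ Finset.univ.erase n, z l * F.g l (z l) ≤ Mc := by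
        calc ∑ l ∈ Finset.univ.erase n, z l * F.g l (z l)
            ≤ ∑ l ∈ Finset.univ.erase n, F.g l 0 / F.b l :=
              Finset.sum_le_sum fun l _ => hMl l (z l)
          _ ≤ Mc := Finset.sum_le_sum_of_subset_of_nonneg
              (Finset.subset_univ _) (fun l _ _ => (div_pos (F.gpos l 0) (F.hb l)).le)
      have hzneg : z n < 0 := by linarith
      have hgz : F.g n 0 ≤ F.g n (z n) := (F.anti_g n (by linarith : z n < 0)).le
      have hterm : z n * F.g n (z n) ≤ -(Mc + 1) := by
        calc z n * F.g n (z n) ≤ z n * F.g n 0 := by nlinarith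
          _ ≤ -T * F.g n 0 := by nlinarith [F.gpos n 0]
          _ ≤ -(Mc + 1) := by nlinarith [hTprop n]
      calc ∑ l, z l * F.g l (z l)
          = z n * F.g n (z n) + ∑ l ∈ Finset.univ.erase n, z l * F.g l (z l) :=
            (Finset.add_sum_erase _ _ (Finset.mem_univ n)).symm
        _ ≤ -(Mc+1) + Mc := add_le_add hterm hrest
        _ = -1 := by ring
    rw [W]
    apply div_neg_of_neg_of_pos (by linarith) (F.Q_pos z)
  -- constants for the upper truncation
  set Dbar := ∑ l, F.g l (-T) with hDbar
  set Qbar := 1 + Dbar with hQbar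
  have hQbar1 : 1 ≤ Qbar := by
    rw [hQbar, hDbar]
    have : 0 ≤ ∑ l, F.g l (-T) := Finset.sum_nonneg fun l _ => (F.gpos l (-T)).le
    linarith
  set bmin := Finset.univ.inf' Finset.univ_nonempty F.b with hbmin
  have hbmin_pos : 0 < bmin := by
    rw [hbmin, Finset.lt_inf'_iff]
    exact fun n _ => F.hb n
  have hbmin_le : ∀ n, bmin ≤ F.b n := fun n => Finset.inf'_le _ (Finset.mem_univ n)
  set T' := max T (Mc + (Qbar + 1)/bmin) with hT'
  have hTT' : T ≤ T' := le_max_left _ _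
  have hMcT' : Mc < T' := by
    have h1 : Mc + (Qbar + 1)/bmin ≤ T' := le_max_right _ _
    have h2 : 0 < (Qbar + 1)/bmin := div_pos (by linarith) hbmin_pos
    linarith
  have hT'gap : Qbar + 1 ≤ bmin * (T' - Mc) := by
    have h1 : Mc + (Qbar + 1)/bmin ≤ T' := le_max_right _ _
    have h2 : (Qbar + 1)/bmin ≤ T' - Mc := by linarith
    calc Qbar + 1 = bmin * ((Qbar + 1)/bmin) := by field_simp
      _ ≤ bmin * (T' - Mc) := mul_le_mul_of_nonneg_left h2 hbmin_pos.le
  -- single-coordinate decrease beyond T'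
  have hdec : ∀ z : Fin N → ℝ, (∀ l, -T ≤ z l) → ∀ n, T' < z n →
      F.W z < F.W (Function.update z n T') := by
    intro z hzl n hn
    set C := ∑ l ∈ Finset.univ.erase n, z l * F.g l (z l) with hCdef
    set D := ∑ l ∈ Finset.univ.erase n, F.g l (z l) with hDdef
    have hD0 : 0 ≤ D := Finset.sum_nonneg fun l _ => (F.gpos l (z l)).le
    have hC : C ≤ Mc := by
      calc C ≤ ∑ l ∈ Finset.univ.erase n, F.g l 0 / F.b l :=
            Finset.sum_le_sum fun l _ => hMl l (z l)
        _ ≤ Mc := Finset.sum_le_sum_of_subset_of_nonneg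
            (Finset.subset_univ _) (fun l _ _ => (div_pos (F.gpos l 0) (F.hb l)).le)
    set f0 := F.g n T' with hf0def
    have hf0pos : 0 < f0 := F.gpos n T'
    have hQb : 1 + D + f0 ≤ Qbar := by
      have h1 : ∀ l, l ∈ Finset.univ.erase n → F.g l (z l) ≤ F.g l (-T) := by
        intro l _
        rcases eq_or_lt_of_le (hzl l) with h | h
        · rw [← h]
        · exact (F.anti_g l h).le
      have h2 : D ≤ ∑ l ∈ Finset.univ.erase n, F.g l (-T) := Finset.sum_le_sum h1
      have h3 : f0 ≤ F.g n (-T) := by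
        have : -T < T' := by linarith
        exact (F.anti_g n this).le
      have h4 : F.g n (-T) + ∑ l ∈ Finset.univ.erase n, F.g l (-T) = Dbar := by
        rw [hDbar]
        exact Finset.add_sum_erase Finset.univ (fun l => F.g l (-T)) (Finset.mem_univ n)
      rw [hQbar]
      linarith
    have hWz : F.W z = (z n * F.g n (z n) + C)/(1 + D + F.g n (z n)) := by
      conv_lhs => rw [← Function.update_eq_self n z]
      exact F.W_update z n (z n)
    have hWu : F.W (Function.update z n T') = (T' * f0 + C)/(1 + D + f0) :=
      F.W_update z n T'
    set Δ := z n - T' with hΔdef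
    have hΔpos : 0 < Δ := by rw [hΔdef]; linarith
    -- majorization of g at z n
    obtain ⟨β, hβ⟩ := F.hRne n T'
    have hββ : bmin ≤ β := le_trans (hbmin_le n) (F.hRb n T' β hβ).1
    have hgm : F.g n (z n) ≤ exp ((-bmin) * Δ) * f0 := by
      have h1 := F.hmaj n T' β hβ (z n)
      have h2 : exp (-β * (z n - T')) ≤ exp ((-bmin) * Δ) := by
        apply exp_le_exp.mpr
        rw [hΔdef]
        nlinarith
      calc F.g n (z n) ≤ exp (-β * (z n - T')) * F.g n T' := h1
        _ ≤ exp ((-bmin) * Δ) * f0 := by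
            rw [hf0def]
            exact mul_le_mul_of_nonneg_right h2 (F.gpos n T').le
    have hgap : ∀ s ≥ (0:ℝ), Qbar + 1 ≤ bmin * ((T' + s) * (1 + D) - C) := by
      intro s hs
      have h1 : T' - Mc ≤ (T' + s) * (1 + D) - C := by
        have hT'pos : 0 < T' := by linarith
        nlinarith
      calc Qbar + 1 ≤ bmin * (T' - Mc) := hT'gap
        _ ≤ bmin * ((T' + s) * (1 + D) - C) :=
            mul_le_mul_of_nonneg_left h1 hbmin_pos.le
    have hanti := psi_strictAnti (t1 := T') (C := C) hf0pos hD0 hbmin_pos hQb hgap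
    have hstep2 : ((T' + 1*Δ) * (exp ((-bmin)*Δ) * f0) + C) / (1 + D + exp ((-bmin)*Δ) * f0)
        < ((T' + 1*0) * (exp ((-bmin)*0) * f0) + C) / (1 + D + exp ((-bmin)*0) * f0) :=
      hanti (le_refl (0:ℝ) : (0:ℝ) ∈ Ici (0:ℝ)) (le_of_lt hΔpos : Δ ∈ Ici (0:ℝ)) hΔpos
    have hψ0 : ((T' + 1*0) * (exp ((-bmin)*0) * f0) + C) / (1 + D + exp ((-bmin)*0) * f0)
        = (T' * f0 + C)/(1 + D + f0) := by norm_num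
    have hstep1 : F.W z ≤ ((T' + 1*Δ) * (exp ((-bmin)*Δ) * f0) + C)
        / (1 + D + exp ((-bmin)*Δ) * f0) := by
      rw [hWz]
      have hzn_eq : z n = T' + 1*Δ := by rw [hΔdef]; ring
      have hsign : 0 ≤ (T' + 1*Δ) * (1 + D) - C := by
        have hpos : 0 < T' + 1*Δ := by nlinarith
        nlinarith [hC, hMcT', hD0, mul_nonneg hpos.le hD0]
      calc (z n * F.g n (z n) + C)/(1 + D + F.g n (z n))
          = ((T' + 1*Δ) * F.g n (z n) + C)/(1 + D + F.g n (z n)) := by rw [← hzn_eq]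
        _ ≤ ((T' + 1*Δ) * (exp ((-bmin)*Δ) * f0) + C) / (1 + D + exp ((-bmin)*Δ) * f0) :=
            Phi_mono (by linarith : (-1:ℝ) < D) (F.gpos n (z n)) hgm hsign
    calc F.W z ≤ _ := hstep1
      _ < _ := hstep2
      _ = (T' * f0 + C)/(1 + D + f0) := hψ0
      _ = F.W (Function.update z n T') := hWu.symm
  -- truncation
  have htrunc : ∀ k : ℕ, ∀ z : Fin N → ℝ, (∀ l, -T ≤ z l) →
      (Finset.univ.filter (fun l => T' < z l)).card ≤ k →
      F.W z ≤ F.W (fun l => min (z l) T') := by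
    intro k
    induction k with
    | zero =>
      intro z hzl hcard
      have hempty : ∀ l, ¬ (T' < z l) := by
        intro l hl
        have : l ∈ Finset.univ.filter (fun l => T' < z l) := by
          simp [hl]
        have := Finset.card_pos.mpr ⟨l, this⟩
        omega
      have heq : (fun l => min (z l) T') = z :=
        funext fun l => min_eq_left (le_of_not_gt (hempty l))
      rw [heq]
    | succ k ih =>
      intro z hzl hcard
      by_cases hex : ∃ n, T' < z n
      · obtain ⟨n, hn⟩ := hex
        have hdec' := hdec z hzl n hn
        have hzl2 : ∀ l, -T ≤ Function.update z n T' l := by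
          intro l
          rcases eq_or_ne l n with rfl | hne
          · rw [Function.update_self]; linarith
          · rw [Function.update_of_ne hne]; exact hzl l
        have hsub : Finset.univ.filter (fun l => T' < Function.update z n T' l)
            ⊆ (Finset.univ.filter (fun l => T' < z l)).erase n := by
          intro l hl
          rw [Finset.mem_filter] at hl
          have hlne : l ≠ n := by
            intro heq
            rw [heq, Function.update_self] at hl
            exact lt_irrefl _ hl.2
          rw [Function.update_of_ne hlne] at hl
          exact Finset.mem_erase.mpr ⟨hlne, Finset.mem_filter.mpr ⟨Finset.mem_univ l, hl.2⟩⟩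
        have hmemn : n ∈ Finset.univ.filter (fun l => T' < z l) := by
          simp [hn]
        have hcard2 : (Finset.univ.filter (fun l => T' < Function.update z n T' l)).card ≤ k := by
          have h1 := Finset.card_le_card hsub
          have h2 := Finset.card_erase_of_mem hmemn
          omega
        have ih' := ih (Function.update z n T') hzl2 hcard2
        have heqtr : (fun l => min (Function.update z n T' l) T') = fun l => min (z l) T' := by
          funext l
          rcases eq_or_ne l n with rfl | hne
          · rw [Function.update_self, min_self, min_eq_right hn.le]
          · rw [Function.update_of_ne hne]
        rw [heqtr] at ih'
        linarith
      · push_neg at hex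
        have heq : (fun l => min (z l) T') = z :=
          funext fun l => min_eq_left (hex l)
        rw [heq]
  -- box argmax
  set K : Set (Fin N → ℝ) := Icc (fun _ => -T) (fun _ => T') with hK
  have hKcomp : IsCompact K := isCompact_Icc
  have hone : (fun _ : Fin N => (1:ℝ)) ∈ K := by
    constructor
    · intro l; simp only; linarith
    · intro l; simp only; linarith
  have hKne : K.Nonempty := ⟨_, hone⟩
  have hWcont : Continuous F.W := by
    apply Continuous.div
    · exact continuous_finset_sum _ fun l _ =>
        (continuous_apply l).mul ((F.cont_g l).comp (continuous_apply l))
    · exact continuous_const.add (continuous_finset_sum _ fun l _ =>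
        (F.cont_g l).comp (continuous_apply l))
    · exact fun z => ne_of_gt (F.Q_pos z)
  obtain ⟨zs, hzsK, hzsmax⟩ := hKcomp.exists_isMaxOn hKne hWcont.continuousOn
  have hW1 : 0 < F.W (fun _ => 1) := by
    rw [W]
    apply div_pos
    · apply Finset.sum_pos (fun l _ => by
        simpa using F.gpos l 1) Finset.univ_nonempty
    · exact F.Q_pos _
  refine ⟨zs, ?_⟩
  intro z
  by_cases hlow : ∀ l, -T ≤ z l
  · have h1 := htrunc (Finset.univ.filter (fun l => T' < z l)).card z hlow le_rfl
    have h2 : (fun l => min (z l) T') ∈ K := by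
      constructor
      · intro l
        simp only
        exact le_min (hlow l) (by linarith)
      · intro l
        simp only
        exact min_le_right _ _
    exact le_trans h1 (hzsmax h2)
  · push_neg at hlow
    obtain ⟨n, hn⟩ := hlow
    have h1 : F.W z < 0 := hneg z n hn
    have h2 : 0 < F.W zs := lt_of_lt_of_le hW1 (hzsmax hone)
    linarith

/-- Master theorem at the abstract level. -/
theorem master (hN : 1 ≤ N) :
    ∃ zs : Fin N → ℝ, IsLocalMax F.W zs ∧ (∀ z, IsLocalMax F.W z → z = zs) ∧
      (∀ z, z ≠ zs → F.W z < F.W zs) ∧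
      ∃ βv : Fin N → ℝ, (∀ n, F.R n (zs n) (βv n)) ∧
        ∀ n, zs n = 1 / βv n + ∑ l, F.g l (zs l) / βv l := by
  obtain ⟨zs, hglob⟩ := F.exists_max hN
  have hloc : IsLocalMax F.W zs := Filter.Eventually.of_forall fun z => hglob z
  obtain ⟨βs, hRs, hEqs⟩ := F.foc_sys hloc
  have huniq : ∀ z, IsLocalMax F.W z → z = zs := by
    intro z hz
    obtain ⟨βv, hRv, hEqv⟩ := F.foc_sys hz
    exact F.sys_eq hRv hRs hEqv hEqs
  refine ⟨zs, hloc, huniq, ?_, βs, hRs, fun n => by rw [hEqs n]; ring⟩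
  intro z hne
  rcases lt_or_eq_of_le (hglob z) with h | h
  · exact h
  · exfalso
    have hz : IsLocalMax F.W z :=
      Filter.Eventually.of_forall fun y => le_trans (hglob y) (le_of_eq h.symm)
    exact hne (huniq z hz)

end GFam



/-- `G^n(Y^n | z, a^n, b^n) = G^n((exp(a_i − b_i (z + c_i)))_{i ∈ V_n})` where the
partition `V_n = {i | part i = n}`. -/
noncomputable def GzP (m N : ℕ) (part : Fin m → Fin N)
    (Gn : ∀ n : Fin N, ({i : Fin m // part i = n} → ℝ) → ℝ)
    (c : Fin m → ℝ) (n : Fin N) (z : ℝ)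
    (ab : ({i : Fin m // part i = n} → ℝ) × ({i : Fin m // part i = n} → ℝ)) : ℝ :=
  Gn n fun i => Real.exp (ab.1 i - ab.2 i * (z + c i.1))

/-- `ĝ_n(z) = min_{(a^n, b^n) ∈ A^n} G^n(Y^n | z, a^n, b^n)`. -/
noncomputable def ghatP (m N : ℕ) (part : Fin m → Fin N)
    (Gn : ∀ n : Fin N, ({i : Fin m // part i = n} → ℝ) → ℝ)
    (c : Fin m → ℝ)
    (An : ∀ n : Fin N,
      Set (({i : Fin m // part i = n} → ℝ) × ({i : Fin m // part i = n} → ℝ)))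
    (n : Fin N) (z : ℝ) : ℝ :=
  sInf (GzP m N part Gn c n z '' An n)

/-- Reduced robust objective `W(z) = (Σ_n z_n ĝ_n(z_n)) / (1 + Σ_l ĝ_l(z_l))`. -/
noncomputable def WP (m N : ℕ) (part : Fin m → Fin N)
    (Gn : ∀ n : Fin N, ({i : Fin m // part i = n} → ℝ) → ℝ)
    (c : Fin m → ℝ)
    (An : ∀ n : Fin N,
      Set (({i : Fin m // part i = n} → ℝ) × ({i : Fin m // part i = n} → ℝ)))
    (z : Fin N → ℝ) : ℝ :=
  (∑ n, z n * ghatP m N part Gn c An n (z n)) /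
    (1 + ∑ l, ghatP m N part Gn c An l (z l))

/-- `W` has exactly one local maximizer `z*`, which is also its
unique global maximizer, and `z*` satisfies the fixed-point system
`z*_n = 1/β*_n + Σ_l ĝ_l(z*_l)/β*_l`, where `β*_n` is the common price-sensitivity
value of a minimizer `(a^{n*}, b^{n*}) ∈ A^n` of `G^n(Y^n|z*_n, ·, ·)`. -/
theorem stmt_9
    (m N : ℕ) (hN : 1 ≤ N)
    (part : Fin m → Fin N) (hpart : ∀ n : Fin N, ∃ i, part i = n)
    (Gn : ∀ n : Fin N, ({i : Fin m // part i = n} → ℝ) → ℝ)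
    (hGnonneg : ∀ n, ∀ Y : {i : Fin m // part i = n} → ℝ,
      (∀ i, 0 < Y i) → 0 ≤ Gn n Y)
    (hGsmooth : ∀ n, ContDiffOn ℝ 2 (Gn n)
      {Y : {i : Fin m // part i = n} → ℝ | ∀ i, 0 < Y i})
    (hGhom : ∀ n, ∀ lam : ℝ, 0 < lam → ∀ Y : {i : Fin m // part i = n} → ℝ,
      (∀ i, 0 < Y i) → Gn n (lam • Y) = lam * Gn n Y)
    (hGd1 : ∀ n, ∀ Y : {i : Fin m // part i = n} → ℝ, (∀ i, 0 < Y i) →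
      ∀ i, 0 < fderiv ℝ (Gn n) Y (Pi.single i 1))
    (hGd2 : ∀ n, ∀ Y : {i : Fin m // part i = n} → ℝ, (∀ i, 0 < Y i) →
      ∀ i j, i ≠ j →
        fderiv ℝ (fun W => fderiv ℝ (Gn n) W (Pi.single i 1)) Y (Pi.single j 1) ≤ 0)
    (An : ∀ n : Fin N,
      Set (({i : Fin m // part i = n} → ℝ) × ({i : Fin m // part i = n} → ℝ)))
    (hAne : ∀ n, (An n).Nonempty) (hAconv : ∀ n, Convex ℝ (An n))
    (hAcomp : ∀ n, IsCompact (An n))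
    (hAb : ∀ n, ∀ ab ∈ An n, ∃ β : ℝ, 0 < β ∧ ∀ i, ab.2 i = β)
    (c : Fin m → ℝ) (hc : ∀ i, 0 ≤ c i) :
    ∃ zs : Fin N → ℝ,
      IsLocalMax (WP m N part Gn c An) zs ∧
      (∀ z : Fin N → ℝ, IsLocalMax (WP m N part Gn c An) z → z = zs) ∧
      (∀ z : Fin N → ℝ, z ≠ zs →
        WP m N part Gn c An z < WP m N part Gn c An zs) ∧
      ∃ (abs : ∀ n : Fin N,
          ({i : Fin m // part i = n} → ℝ) × ({i : Fin m // part i = n} → ℝ))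
        (β : Fin N → ℝ),
        (∀ n, abs n ∈ An n) ∧
        (∀ n, ∀ ab ∈ An n,
          GzP m N part Gn c n (zs n) (abs n) ≤ GzP m N part Gn c n (zs n) ab) ∧
        (∀ n, 0 < β n) ∧
        (∀ n, ∀ i, (abs n).2 i = β n) ∧
        (∀ n, zs n = 1 / β n +
          ∑ l, ghatP m N part Gn c An l (zs l) / β l) := by

  classical
  have hne : ∀ n : Fin N, Nonempty {i : Fin m // part i = n} := fun n =>
    (hpart n).elim fun i h => ⟨⟨i, h⟩⟩
  -- bounds on the price sensitivities of minimizers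
  have hbB : ∀ n : Fin N, ∃ bb BB : ℝ, 0 < bb ∧ ∀ z β,
      Stmt9.Rrel (Gn n) (fun i => c i.1) (An n) z β → bb ≤ β ∧ β ≤ BB := by
    intro n
    haveI := hne n
    obtain ⟨bb, BB, hbb, h⟩ := Stmt9.exists_bB (hAne n) (hAcomp n) (hAb n)
    refine ⟨bb, BB, hbb, fun z β hR => ?_⟩
    obtain ⟨ab, hab, hbet, -⟩ := Stmt9.Rrel_bet (hAb n) hR
    rw [← hbet]
    exact h ab hab
  choose bfun Bfun hbpos hRbound using hbB
  -- assemble the abstract family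
  set F : GFam N :=
    { g := fun n => Stmt9.gh (Gn n) (fun i => c i.1) (An n)
      R := fun n => Stmt9.Rrel (Gn n) (fun i => c i.1) (An n)
      b := bfun
      B := Bfun
      hb := hbpos
      gpos := fun n z => by
        haveI := hne n
        exact Stmt9.gh_pos (hGsmooth n) (hGhom n) (hGd1 n) (hAne n) (hAcomp n) z
      hRb := fun n z β hR => hRbound n z β hR
      hRmono := fun n z z' β β' hzz h h' => by
        haveI := hne n
        exact Stmt9.Rrel_mono (hGsmooth n) (hGhom n) (hGd1 n) (hAb n) hzz h h'
      hRint := fun n z β1 β2 β h1 h2 hb1 hb2 => by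
        haveI := hne n
        exact Stmt9.Rrel_interval (hGsmooth n) (hGhom n) (hGd1 n) (hGd2 n)
          (hAconv n) (hAb n) h1 h2 hb1 hb2
      hmaj := fun n z β hR z' => by
        haveI := hne n
        exact Stmt9.Rrel_maj (hGsmooth n) (hGhom n) (hAne n) (hAcomp n) (hAb n) hR z'
      hhi := fun n z => by
        haveI := hne n
        exact Stmt9.exists_hi (hGsmooth n) (hGhom n) (hGd1 n) (hAne n) (hAcomp n)
          (hAb n) z
      hlo := fun n z => by
        haveI := hne n
        exact Stmt9.exists_lo (hGsmooth n) (hGhom n) (hGd1 n) (hAne n) (hAcomp n)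
          (hAb n) z } with hFdef
  have hWeq : WP m N part Gn c An = F.W := rfl
  obtain ⟨zs, hloc, huniq, hstrict, βv, hRs, hEqs⟩ := F.master hN
  refine ⟨zs, hWeq ▸ hloc, fun z hz => huniq z (hWeq ▸ hz), fun z hz => by
    rw [hWeq]; exact hstrict z hz, ?_⟩
  -- extract minimizers
  have hRs' : ∀ n, ∃ ab ∈ An n,
      (∀ ab' ∈ An n, Stmt9.Fz (Gn n) (fun i => c i.1) (zs n) ab
        ≤ Stmt9.Fz (Gn n) (fun i => c i.1) (zs n) ab') ∧ ∀ i, ab.2 i = βv n :=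
    fun n => hRs n
  choose abs habsA habs using hRs'
  refine ⟨abs, βv, habsA, fun n ab hab => (habs n).1 ab hab, ?_, fun n => (habs n).2, ?_⟩
  · intro n
    exact lt_of_lt_of_le (hbpos n) (hRbound n (zs n) (βv n) (hRs n)).1
  · intro n
    exact hEqs n
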